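/- arXiv:1603.02931 — 3 statements merged into one kernel-verified Lean document; each statement's English description precedes it below -/
import Mathlib

section
/- Let H be a Hopf algebra and σ a normalized invertible dual 2-cocycle on H. Define on H the twisted multiplication (1#g)(1#h) = σ(g₍₁₎, h₍₁₎) (1 # g₍₂₎h₍₂₎). Then this multiplication is associative with unit 1#1, and the map β₁ : (1#h) ↦ h₍₁₎ ⊗ (1#h₍₂₎) is an algebra homomorphism from this twisted algebra ℂ#_σH to H^σ ⊗ (ℂ#_σH), where H^σ carries the cocycle-twisted multiplication g·_σ h = σ(g₍₁₎,h₍₁₎) g₍₂₎h₍₂₎ σ⁻¹(g₍₃₎,h₍₃₎). -/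
open TensorProduct

noncomputable section

variable {H : Type*} [Ring H] [HopfAlgebra ℂ H]

/-- `a ↦ a₍₁₎ ⊗ (a₍₂₎ ⊗ a₍₃₎)`, the twofold comultiplication. -/
noncomputable def comul₂ : H →ₗ[ℂ] H ⊗[ℂ] (H ⊗[ℂ] H) :=
  (TensorProduct.map LinearMap.id (Coalgebra.comul (R := ℂ))) ∘ₗ (Coalgebra.comul (R := ℂ))

/-- `σ(a₍₁₎,b₍₁₎)·σ(a₍₂₎b₍₂₎,c)` (Sweedler sums). -/
noncomputable def cocycleLHS (σ : H ⊗[ℂ] H →ₗ[ℂ] ℂ) (a b c : H) : ℂ :=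
  LinearMap.mul' ℂ ℂ
    (TensorProduct.map σ
      (σ ∘ₗ ((TensorProduct.mk ℂ H H).flip c) ∘ₗ LinearMap.mul' ℂ H)
      (TensorProduct.tensorTensorTensorComm ℂ H H H H
        ((Coalgebra.comul (R := ℂ) a) ⊗ₜ[ℂ] (Coalgebra.comul (R := ℂ) b))))

/-- `σ(b₍₁₎,c₍₁₎)·σ(a,b₍₂₎c₍₂₎)` (Sweedler sums). -/
noncomputable def cocycleRHS (σ : H ⊗[ℂ] H →ₗ[ℂ] ℂ) (a b c : H) : ℂ :=
  LinearMap.mul' ℂ ℂ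
    (TensorProduct.map σ
      (σ ∘ₗ (TensorProduct.mk ℂ H H a) ∘ₗ LinearMap.mul' ℂ H)
      (TensorProduct.tensorTensorTensorComm ℂ H H H H
        ((Coalgebra.comul (R := ℂ) b) ⊗ₜ[ℂ] (Coalgebra.comul (R := ℂ) c))))

/-- `σ` is a dual 2-cocycle. -/
def IsDualCocycle (σ : H ⊗[ℂ] H →ₗ[ℂ] ℂ) : Prop :=
  ∀ a b c : H, cocycleLHS σ a b c = cocycleRHS σ a b c

/-- `σ` is normalized: `σ(1,h) = σ(h,1) = ε(h)`. -/
def IsNormalizedDualCocycle (σ : H ⊗[ℂ] H →ₗ[ℂ] ℂ) : Prop :=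
  ∀ h : H, σ (1 ⊗ₜ[ℂ] h) = Coalgebra.counit (R := ℂ) h ∧
    σ (h ⊗ₜ[ℂ] 1) = Coalgebra.counit (R := ℂ) h

/-- Convolution `σ(a₍₁₎,b₍₁₎)·τ(a₍₂₎,b₍₂₎)`. -/
noncomputable def conv₂ (σ τ : H ⊗[ℂ] H →ₗ[ℂ] ℂ) (a b : H) : ℂ :=
  LinearMap.mul' ℂ ℂ
    (TensorProduct.map σ τ
      (TensorProduct.tensorTensorTensorComm ℂ H H H H
        ((Coalgebra.comul (R := ℂ) a) ⊗ₜ[ℂ] (Coalgebra.comul (R := ℂ) b))))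

/-- `σ'` is a convolution inverse of `σ`. -/
def IsConvInverse (σ σ' : H ⊗[ℂ] H →ₗ[ℂ] ℂ) : Prop :=
  ∀ a b : H,
    conv₂ σ σ' a b = Coalgebra.counit (R := ℂ) a * Coalgebra.counit (R := ℂ) b ∧
    conv₂ σ' σ a b = Coalgebra.counit (R := ℂ) a * Coalgebra.counit (R := ℂ) b

/-- The twisted multiplication `g ·_σ h = σ(g₍₁₎,h₍₁₎) g₍₂₎h₍₂₎ σ⁻¹(g₍₃₎,h₍₃₎)`,
as a linear map on `H ⊗ H`. -/
noncomputable def twistMul (σ σ' : H ⊗[ℂ] H →ₗ[ℂ] ℂ) : H ⊗[ℂ] H →ₗ[ℂ] H :=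
  (TensorProduct.lid ℂ H).toLinearMap ∘ₗ
  TensorProduct.map σ
    ((TensorProduct.rid ℂ H).toLinearMap ∘ₗ TensorProduct.map (LinearMap.mul' ℂ H) σ') ∘ₗ
  TensorProduct.map LinearMap.id
    (TensorProduct.tensorTensorTensorComm ℂ H H H H).toLinearMap ∘ₗ
  (TensorProduct.tensorTensorTensorComm ℂ H (H ⊗[ℂ] H) H (H ⊗[ℂ] H)).toLinearMap ∘ₗ
  TensorProduct.map comul₂ comul₂

/-- The smash product multiplication `(1#g)(1#h) = σ(g₍₁₎,h₍₁₎)·(1#g₍₂₎h₍₂₎)` on `ℂ#_σH`. -/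
noncomputable def smashMul (σ : H ⊗[ℂ] H →ₗ[ℂ] ℂ) : H ⊗[ℂ] H →ₗ[ℂ] H :=
  (TensorProduct.lid ℂ H).toLinearMap ∘ₗ
  TensorProduct.map σ (LinearMap.mul' ℂ H) ∘ₗ
  (TensorProduct.tensorTensorTensorComm ℂ H H H H).toLinearMap ∘ₗ
  TensorProduct.map (Coalgebra.comul (R := ℂ)) (Coalgebra.comul (R := ℂ))

open Coalgebra

lemma comul₂_eq_right (x : H) (r : Coalgebra.Repr ℂ x (H × H))
    (R : ∀ i, Coalgebra.Repr ℂ (r.right i) (H × H)) :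
    comul₂ (H := H) x = ∑ i ∈ r.index, ∑ p ∈ (R i).index,
      r.left i ⊗ₜ[ℂ] ((R i).left p ⊗ₜ[ℂ] (R i).right p) := by
  have : comul₂ (H := H) x
      = (TensorProduct.map LinearMap.id (Coalgebra.comul (R := ℂ)))
          (∑ i ∈ r.index, r.left i ⊗ₜ[ℂ] r.right i) := by
    rw [r.eq]; rfl
  rw [this, map_sum]
  refine Finset.sum_congr rfl fun i _ => ?_
  rw [map_tmul, ← (R i).eq, tmul_sum]
  simp

lemma comul₂_eq_left (x : H) (r : Coalgebra.Repr ℂ x (H × H))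
    (L : ∀ i, Coalgebra.Repr ℂ (r.left i) (H × H)) :
    comul₂ (H := H) x = ∑ i ∈ r.index, ∑ s ∈ (L i).index,
      (L i).left s ⊗ₜ[ℂ] ((L i).right s ⊗ₜ[ℂ] r.right i) := by
  have h0 : comul₂ (H := H) x
      = (TensorProduct.assoc ℂ H H H).toLinearMap
          ((Coalgebra.comul (R := ℂ)).rTensor H (Coalgebra.comul (R := ℂ) x)) := by
    show comul₂ (H := H) x = TensorProduct.assoc ℂ H H H
          ((Coalgebra.comul (R := ℂ)).rTensor H (Coalgebra.comul (R := ℂ) x))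
    rw [Coalgebra.coassoc_apply]; rfl
  rw [h0, ← r.eq, map_sum, map_sum]
  refine Finset.sum_congr rfl fun i _ => ?_
  rw [LinearMap.rTensor_tmul, ← (L i).eq, sum_tmul, map_sum]
  simp

-- swap lemma
lemma sum_swap_comul₂ {M : Type*} [AddCommMonoid M] [Module ℂ M]
    (T : H ⊗[ℂ] (H ⊗[ℂ] H) →ₗ[ℂ] M) (x : H) (r : Coalgebra.Repr ℂ x (H × H))
    (L : ∀ i, Coalgebra.Repr ℂ (r.left i) (H × H)) (R : ∀ i, Coalgebra.Repr ℂ (r.right i) (H × H)) :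
    ∑ i ∈ r.index, ∑ s ∈ (L i).index,
      T ((L i).left s ⊗ₜ[ℂ] ((L i).right s ⊗ₜ[ℂ] r.right i))
    = ∑ i ∈ r.index, ∑ p ∈ (R i).index,
      T (r.left i ⊗ₜ[ℂ] ((R i).left p ⊗ₜ[ℂ] (R i).right p)) := by
  have h1 := congrArg T (comul₂_eq_left x r L)
  have h2 := congrArg T (comul₂_eq_right x r R)
  simp only [map_sum] at h1 h2
  rw [← h1, ← h2]

section cv
variable {A : Type*} [Ring A] [Algebra ℂ A]

/-- comultiplication on H ⊗ H -/
noncomputable def δ₂ : H ⊗[ℂ] H →ₗ[ℂ] (H ⊗[ℂ] H) ⊗[ℂ] (H ⊗[ℂ] H) :=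
  (TensorProduct.tensorTensorTensorComm ℂ H H H H).toLinearMap ∘ₗ
    TensorProduct.map (Coalgebra.comul (R := ℂ)) (Coalgebra.comul (R := ℂ))

/-- comultiplication on (H ⊗ H) ⊗ H -/
noncomputable def δ₃ : (H ⊗[ℂ] H) ⊗[ℂ] H →ₗ[ℂ]
    ((H ⊗[ℂ] H) ⊗[ℂ] H) ⊗[ℂ] ((H ⊗[ℂ] H) ⊗[ℂ] H) :=
  (TensorProduct.tensorTensorTensorComm ℂ (H ⊗[ℂ] H) (H ⊗[ℂ] H) H H).toLinearMap ∘ₗ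
    TensorProduct.map δ₂ (Coalgebra.comul (R := ℂ))

/-- convolution product on Hom(H⊗H, A) -/
noncomputable def cv₂ (f g : H ⊗[ℂ] H →ₗ[ℂ] A) : H ⊗[ℂ] H →ₗ[ℂ] A :=
  LinearMap.mul' ℂ A ∘ₗ TensorProduct.map f g ∘ₗ δ₂

/-- convolution product on Hom((H⊗H)⊗H, A) -/
noncomputable def cv₃ (f g : (H ⊗[ℂ] H) ⊗[ℂ] H →ₗ[ℂ] A) : (H ⊗[ℂ] H) ⊗[ℂ] H →ₗ[ℂ] A :=
  LinearMap.mul' ℂ A ∘ₗ TensorProduct.map f g ∘ₗ δ₃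

lemma δ₂_tmul (a b : H) (ra : Coalgebra.Repr ℂ a (H × H)) (rb : Coalgebra.Repr ℂ b (H × H)) :
    δ₂ (a ⊗ₜ[ℂ] b) = ∑ i ∈ ra.index, ∑ j ∈ rb.index,
      (ra.left i ⊗ₜ[ℂ] rb.left j) ⊗ₜ[ℂ] (ra.right i ⊗ₜ[ℂ] rb.right j) := by
  simp only [δ₂, LinearMap.comp_apply, map_tmul, LinearEquiv.coe_coe, ← ra.eq, ← rb.eq,
    sum_tmul, tmul_sum, map_sum]
  simp only [tensorTensorTensorComm_tmul]
  rw [Finset.sum_comm]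

lemma cv₂_tmul (f g : H ⊗[ℂ] H →ₗ[ℂ] A) (a b : H)
    (ra : Coalgebra.Repr ℂ a (H × H)) (rb : Coalgebra.Repr ℂ b (H × H)) :
    cv₂ f g (a ⊗ₜ[ℂ] b) = ∑ i ∈ ra.index, ∑ j ∈ rb.index,
      f (ra.left i ⊗ₜ[ℂ] rb.left j) * g (ra.right i ⊗ₜ[ℂ] rb.right j) := by
  simp only [cv₂, LinearMap.comp_apply, δ₂_tmul a b ra rb, map_sum, map_tmul,
    LinearMap.mul'_apply]

lemma δ₃_tmul (a b c : H) (ra : Coalgebra.Repr ℂ a (H × H)) (rb : Coalgebra.Repr ℂ b (H × H))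
    (rc : Coalgebra.Repr ℂ c (H × H)) :
    δ₃ ((a ⊗ₜ[ℂ] b) ⊗ₜ[ℂ] c) = ∑ i ∈ ra.index, ∑ j ∈ rb.index, ∑ u ∈ rc.index,
      ((ra.left i ⊗ₜ[ℂ] rb.left j) ⊗ₜ[ℂ] rc.left u) ⊗ₜ[ℂ]
        ((ra.right i ⊗ₜ[ℂ] rb.right j) ⊗ₜ[ℂ] rc.right u) := by
  simp only [δ₃, LinearMap.comp_apply, map_tmul, LinearEquiv.coe_coe,
    δ₂_tmul a b ra rb, ← rc.eq, sum_tmul, tmul_sum, map_sum]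
  simp only [tensorTensorTensorComm_tmul]
  rw [Finset.sum_comm]
  refine Finset.sum_congr rfl fun i _ => ?_
  rw [Finset.sum_comm]

lemma cv₃_tmul (f g : (H ⊗[ℂ] H) ⊗[ℂ] H →ₗ[ℂ] A) (a b c : H)
    (ra : Coalgebra.Repr ℂ a (H × H)) (rb : Coalgebra.Repr ℂ b (H × H)) (rc : Coalgebra.Repr ℂ c (H × H)) :
    cv₃ f g ((a ⊗ₜ[ℂ] b) ⊗ₜ[ℂ] c) = ∑ i ∈ ra.index, ∑ j ∈ rb.index, ∑ u ∈ rc.index,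
      f ((ra.left i ⊗ₜ[ℂ] rb.left j) ⊗ₜ[ℂ] rc.left u) *
        g ((ra.right i ⊗ₜ[ℂ] rb.right j) ⊗ₜ[ℂ] rc.right u) := by
  simp only [cv₃, LinearMap.comp_apply, δ₃_tmul a b c ra rb rc, map_sum, map_tmul,
    LinearMap.mul'_apply]

/-- triple product gadget -/
noncomputable def triA (φ ψ χ : H →ₗ[ℂ] A) : H ⊗[ℂ] (H ⊗[ℂ] H) →ₗ[ℂ] A :=
  LinearMap.mul' ℂ A ∘ₗ TensorProduct.map φ (LinearMap.mul' ℂ A ∘ₗ TensorProduct.map ψ χ)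

@[simp] lemma triA_tmul (φ ψ χ : H →ₗ[ℂ] A) (x y z : H) :
    triA φ ψ χ (x ⊗ₜ[ℂ] (y ⊗ₜ[ℂ] z)) = φ x * (ψ y * χ z) := by
  simp [triA]

end cv

section cvassoc
variable {A : Type*} [Ring A] [Algebra ℂ A]

lemma sum4_reorder {M : Type*} [AddCommMonoid M] {ιa ιb : Type*} (sa : Finset ιa)
    (sb : Finset ιb) {κa : ιa → Type*} {κb : ιb → Type*} (ta : ∀ i, Finset (κa i))
    (tb : ∀ j, Finset (κb j)) (F : ∀ i, κa i → ∀ j, κb j → M) :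
    ∑ i ∈ sa, ∑ p ∈ ta i, ∑ j ∈ sb, ∑ t ∈ tb j, F i p j t
    = ∑ j ∈ sb, ∑ t ∈ tb j, ∑ i ∈ sa, ∑ p ∈ ta i, F i p j t :=
  calc ∑ i ∈ sa, ∑ p ∈ ta i, ∑ j ∈ sb, ∑ t ∈ tb j, F i p j t
      = ∑ i ∈ sa, ∑ j ∈ sb, ∑ p ∈ ta i, ∑ t ∈ tb j, F i p j t :=
        Finset.sum_congr rfl fun i _ => Finset.sum_comm
    _ = ∑ j ∈ sb, ∑ i ∈ sa, ∑ p ∈ ta i, ∑ t ∈ tb j, F i p j t := Finset.sum_comm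
    _ = ∑ j ∈ sb, ∑ i ∈ sa, ∑ t ∈ tb j, ∑ p ∈ ta i, F i p j t :=
        Finset.sum_congr rfl fun j _ => Finset.sum_congr rfl fun i _ => Finset.sum_comm
    _ = ∑ j ∈ sb, ∑ t ∈ tb j, ∑ i ∈ sa, ∑ p ∈ ta i, F i p j t :=
        Finset.sum_congr rfl fun j _ => Finset.sum_comm

set_option maxHeartbeats 1000000 in
lemma cv₂_assoc (f g h : H ⊗[ℂ] H →ₗ[ℂ] A) :
    cv₂ (cv₂ f g) h = cv₂ f (cv₂ g h) := by
  apply TensorProduct.ext'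
  intro a b
  have ra := ℛ ℂ a; have rb := ℛ ℂ b
  have La : ∀ i, Coalgebra.Repr ℂ (ra.left i) (H × H) := fun i => ℛ ℂ _
  have Ra : ∀ i, Coalgebra.Repr ℂ (ra.right i) (H × H) := fun i => ℛ ℂ _
  have Lb : ∀ j, Coalgebra.Repr ℂ (rb.left j) (H × H) := fun j => ℛ ℂ _
  have Rb : ∀ j, Coalgebra.Repr ℂ (rb.right j) (H × H) := fun j => ℛ ℂ _
  set Ta : H ⊗[ℂ] (H ⊗[ℂ] H) →ₗ[ℂ] A :=
    ∑ j ∈ rb.index, ∑ t ∈ (Lb j).index,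
      triA (f ∘ₗ (TensorProduct.mk ℂ H H).flip ((Lb j).left t))
        (g ∘ₗ (TensorProduct.mk ℂ H H).flip ((Lb j).right t))
        (h ∘ₗ (TensorProduct.mk ℂ H H).flip (rb.right j)) with hTa
  set Tb : H ⊗[ℂ] (H ⊗[ℂ] H) →ₗ[ℂ] A :=
    ∑ i ∈ ra.index, ∑ p ∈ (Ra i).index,
      triA (f ∘ₗ TensorProduct.mk ℂ H H (ra.left i))
        (g ∘ₗ TensorProduct.mk ℂ H H ((Ra i).left p))
        (h ∘ₗ TensorProduct.mk ℂ H H ((Ra i).right p)) with hTb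
  calc cv₂ (cv₂ f g) h (a ⊗ₜ[ℂ] b)
      = ∑ i ∈ ra.index, ∑ j ∈ rb.index,
          (∑ s ∈ (La i).index, ∑ t ∈ (Lb j).index,
            f ((La i).left s ⊗ₜ[ℂ] (Lb j).left t) * g ((La i).right s ⊗ₜ[ℂ] (Lb j).right t))
          * h (ra.right i ⊗ₜ[ℂ] rb.right j) := by
        rw [cv₂_tmul (cv₂ f g) h a b ra rb]
        exact Finset.sum_congr rfl fun i _ => Finset.sum_congr rfl fun j _ => by
          rw [cv₂_tmul f g _ _ (La i) (Lb j)]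
    _ = ∑ i ∈ ra.index, ∑ s ∈ (La i).index,
          Ta ((La i).left s ⊗ₜ[ℂ] ((La i).right s ⊗ₜ[ℂ] ra.right i)) := by
        simp only [hTa, LinearMap.sum_apply, triA_tmul, LinearMap.comp_apply,
          LinearMap.flip_apply, TensorProduct.mk_apply, Finset.sum_mul]
        refine Finset.sum_congr rfl fun i _ => ?_
        rw [Finset.sum_comm]
        exact Finset.sum_congr rfl fun s _ => Finset.sum_congr rfl fun j _ =>
          Finset.sum_congr rfl fun t _ => by rw [mul_assoc]
    _ = ∑ i ∈ ra.index, ∑ p ∈ (Ra i).index,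
          Ta (ra.left i ⊗ₜ[ℂ] ((Ra i).left p ⊗ₜ[ℂ] (Ra i).right p)) :=
        sum_swap_comul₂ Ta a ra La Ra
    _ = ∑ j ∈ rb.index, ∑ t ∈ (Lb j).index,
          Tb ((Lb j).left t ⊗ₜ[ℂ] ((Lb j).right t ⊗ₜ[ℂ] rb.right j)) := by
        simp only [hTa, hTb, LinearMap.sum_apply, triA_tmul, LinearMap.comp_apply,
          LinearMap.flip_apply, TensorProduct.mk_apply]
        exact sum4_reorder ra.index rb.index (fun i => (Ra i).index)
          (fun j => (Lb j).index) _
    _ = ∑ j ∈ rb.index, ∑ q ∈ (Rb j).index,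
          Tb (rb.left j ⊗ₜ[ℂ] ((Rb j).left q ⊗ₜ[ℂ] (Rb j).right q)) :=
        sum_swap_comul₂ Tb b rb Lb Rb
    _ = cv₂ f (cv₂ g h) (a ⊗ₜ[ℂ] b) := by
        rw [cv₂_tmul f (cv₂ g h) a b ra rb]
        have : ∀ i ∈ ra.index, ∀ j ∈ rb.index,
            f (ra.left i ⊗ₜ[ℂ] rb.left j) * cv₂ g h (ra.right i ⊗ₜ[ℂ] rb.right j)
            = ∑ p ∈ (Ra i).index, ∑ q ∈ (Rb j).index,
                f (ra.left i ⊗ₜ[ℂ] rb.left j) *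
                  (g ((Ra i).left p ⊗ₜ[ℂ] (Rb j).left q) *
                    h ((Ra i).right p ⊗ₜ[ℂ] (Rb j).right q)) := by
          intro i _ j _
          rw [cv₂_tmul g h _ _ (Ra i) (Rb j), Finset.mul_sum]
          exact Finset.sum_congr rfl fun p _ => by rw [Finset.mul_sum]
        rw [Finset.sum_congr rfl fun i hi => Finset.sum_congr rfl fun j hj => this i hi j hj]
        simp only [hTb, LinearMap.sum_apply, triA_tmul, LinearMap.comp_apply,
          TensorProduct.mk_apply]
        rw [sum4_reorder rb.index ra.index (fun j => (Rb j).index)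
          (fun i => (Ra i).index) _]
        exact Finset.sum_congr rfl fun i _ => Finset.sum_comm

end cvassoc

section cv3assoc
variable {A : Type*} [Ring A] [Algebra ℂ A]

lemma sum6_reorder {M : Type*} [AddCommMonoid M] {i1 i2 i3 : Type*} (s1 : Finset i1)
    (s2 : Finset i2) (s3 : Finset i3) {k1 : i1 → Type*} {k2 : i2 → Type*} {k3 : i3 → Type*}
    (t1 : ∀ i, Finset (k1 i)) (t2 : ∀ j, Finset (k2 j)) (t3 : ∀ u, Finset (k3 u))
    (F : ∀ i, k1 i → ∀ j, k2 j → ∀ u, k3 u → M) :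
    ∑ u ∈ s3, ∑ w ∈ t3 u, ∑ i ∈ s1, ∑ p ∈ t1 i, ∑ j ∈ s2, ∑ q ∈ t2 j, F i p j q u w
    = ∑ i ∈ s1, ∑ j ∈ s2, ∑ u ∈ s3, ∑ p ∈ t1 i, ∑ q ∈ t2 j, ∑ w ∈ t3 u,
        F i p j q u w :=
  calc ∑ u ∈ s3, ∑ w ∈ t3 u, ∑ i ∈ s1, ∑ p ∈ t1 i, ∑ j ∈ s2, ∑ q ∈ t2 j, F i p j q u w
      = ∑ i ∈ s1, ∑ p ∈ t1 i, ∑ u ∈ s3, ∑ w ∈ t3 u, ∑ j ∈ s2, ∑ q ∈ t2 j,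
          F i p j q u w :=
        sum4_reorder s3 s1 t3 t1 _
    _ = ∑ i ∈ s1, ∑ p ∈ t1 i, ∑ j ∈ s2, ∑ q ∈ t2 j, ∑ u ∈ s3, ∑ w ∈ t3 u,
          F i p j q u w :=
        Finset.sum_congr rfl fun i _ => Finset.sum_congr rfl fun p _ =>
          sum4_reorder s3 s2 t3 t2 _
    _ = ∑ i ∈ s1, ∑ j ∈ s2, ∑ p ∈ t1 i, ∑ q ∈ t2 j, ∑ u ∈ s3, ∑ w ∈ t3 u,
          F i p j q u w :=
        Finset.sum_congr rfl fun i _ => Finset.sum_comm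
    _ = ∑ i ∈ s1, ∑ j ∈ s2, ∑ p ∈ t1 i, ∑ u ∈ s3, ∑ q ∈ t2 j, ∑ w ∈ t3 u,
          F i p j q u w :=
        Finset.sum_congr rfl fun i _ => Finset.sum_congr rfl fun j _ =>
          Finset.sum_congr rfl fun p _ => Finset.sum_comm
    _ = ∑ i ∈ s1, ∑ j ∈ s2, ∑ u ∈ s3, ∑ p ∈ t1 i, ∑ q ∈ t2 j, ∑ w ∈ t3 u,
          F i p j q u w :=
        Finset.sum_congr rfl fun i _ => Finset.sum_congr rfl fun j _ => Finset.sum_comm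

/-- insert into first slot of (H⊗H)⊗H -/
noncomputable def ins₁ (B C : H) : H →ₗ[ℂ] (H ⊗[ℂ] H) ⊗[ℂ] H :=
  (TensorProduct.mk ℂ (H ⊗[ℂ] H) H).flip C ∘ₗ (TensorProduct.mk ℂ H H).flip B

/-- insert into second slot -/
noncomputable def ins₂ (A' C : H) : H →ₗ[ℂ] (H ⊗[ℂ] H) ⊗[ℂ] H :=
  (TensorProduct.mk ℂ (H ⊗[ℂ] H) H).flip C ∘ₗ TensorProduct.mk ℂ H H A'

/-- insert into third slot -/
noncomputable def ins₃ (E : H ⊗[ℂ] H) : H →ₗ[ℂ] (H ⊗[ℂ] H) ⊗[ℂ] H :=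
  TensorProduct.mk ℂ (H ⊗[ℂ] H) H E

@[simp] lemma ins₁_apply (B C x : H) : ins₁ B C x = (x ⊗ₜ[ℂ] B) ⊗ₜ[ℂ] C := rfl
@[simp] lemma ins₂_apply (A' C x : H) : ins₂ A' C x = (A' ⊗ₜ[ℂ] x) ⊗ₜ[ℂ] C := rfl
@[simp] lemma ins₃_apply (E : H ⊗[ℂ] H) (x : H) : ins₃ E x = E ⊗ₜ[ℂ] x := rfl

set_option maxHeartbeats 4000000 in
lemma cv₃_assoc (f g h : (H ⊗[ℂ] H) ⊗[ℂ] H →ₗ[ℂ] A) :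
    cv₃ (cv₃ f g) h = cv₃ f (cv₃ g h) := by
  apply TensorProduct.ext_threefold
  intro a b c
  have ra := ℛ ℂ a; have rb := ℛ ℂ b; have rc := ℛ ℂ c
  have La : ∀ i, Coalgebra.Repr ℂ (ra.left i) (H × H) := fun i => ℛ ℂ _
  have Ra : ∀ i, Coalgebra.Repr ℂ (ra.right i) (H × H) := fun i => ℛ ℂ _
  have Lb : ∀ j, Coalgebra.Repr ℂ (rb.left j) (H × H) := fun j => ℛ ℂ _
  have Rb : ∀ j, Coalgebra.Repr ℂ (rb.right j) (H × H) := fun j => ℛ ℂ _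
  have Lc : ∀ u, Coalgebra.Repr ℂ (rc.left u) (H × H) := fun u => ℛ ℂ _
  have Rc : ∀ u, Coalgebra.Repr ℂ (rc.right u) (H × H) := fun u => ℛ ℂ _
  set Ta : H ⊗[ℂ] (H ⊗[ℂ] H) →ₗ[ℂ] A :=
    ∑ j ∈ rb.index, ∑ t ∈ (Lb j).index, ∑ u ∈ rc.index, ∑ v ∈ (Lc u).index,
      triA (f ∘ₗ ins₁ ((Lb j).left t) ((Lc u).left v))
        (g ∘ₗ ins₁ ((Lb j).right t) ((Lc u).right v))
        (h ∘ₗ ins₁ (rb.right j) (rc.right u)) with hTa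
  set Tb : H ⊗[ℂ] (H ⊗[ℂ] H) →ₗ[ℂ] A :=
    ∑ i ∈ ra.index, ∑ p ∈ (Ra i).index, ∑ u ∈ rc.index, ∑ v ∈ (Lc u).index,
      triA (f ∘ₗ ins₂ (ra.left i) ((Lc u).left v))
        (g ∘ₗ ins₂ ((Ra i).left p) ((Lc u).right v))
        (h ∘ₗ ins₂ ((Ra i).right p) (rc.right u)) with hTb
  set Tc : H ⊗[ℂ] (H ⊗[ℂ] H) →ₗ[ℂ] A :=
    ∑ i ∈ ra.index, ∑ p ∈ (Ra i).index, ∑ j ∈ rb.index, ∑ q ∈ (Rb j).index,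
      triA (f ∘ₗ ins₃ (ra.left i ⊗ₜ[ℂ] rb.left j))
        (g ∘ₗ ins₃ ((Ra i).left p ⊗ₜ[ℂ] (Rb j).left q))
        (h ∘ₗ ins₃ ((Ra i).right p ⊗ₜ[ℂ] (Rb j).right q)) with hTc
  calc cv₃ (cv₃ f g) h ((a ⊗ₜ[ℂ] b) ⊗ₜ[ℂ] c)
      = ∑ i ∈ ra.index, ∑ j ∈ rb.index, ∑ u ∈ rc.index,
          (∑ s ∈ (La i).index, ∑ t ∈ (Lb j).index, ∑ v ∈ (Lc u).index,
            f (((La i).left s ⊗ₜ[ℂ] (Lb j).left t) ⊗ₜ[ℂ] (Lc u).left v) *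
              g (((La i).right s ⊗ₜ[ℂ] (Lb j).right t) ⊗ₜ[ℂ] (Lc u).right v))
          * h ((ra.right i ⊗ₜ[ℂ] rb.right j) ⊗ₜ[ℂ] rc.right u) := by
        rw [cv₃_tmul (cv₃ f g) h a b c ra rb rc]
        exact Finset.sum_congr rfl fun i _ => Finset.sum_congr rfl fun j _ =>
          Finset.sum_congr rfl fun u _ => by
            rw [cv₃_tmul f g _ _ _ (La i) (Lb j) (Lc u)]
    _ = ∑ i ∈ ra.index, ∑ s ∈ (La i).index,
          Ta ((La i).left s ⊗ₜ[ℂ] ((La i).right s ⊗ₜ[ℂ] ra.right i)) := by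
        simp only [hTa, LinearMap.sum_apply, triA_tmul, LinearMap.comp_apply,
          ins₁_apply, Finset.sum_mul]
        -- order (i,j,u,s,t,v) → (i,s,j,t,u,v)
        refine Finset.sum_congr rfl fun i _ => ?_
        calc ∑ j ∈ rb.index, ∑ u ∈ rc.index, ∑ s ∈ (La i).index, ∑ t ∈ (Lb j).index,
              ∑ v ∈ (Lc u).index,
              f (((La i).left s ⊗ₜ[ℂ] (Lb j).left t) ⊗ₜ[ℂ] (Lc u).left v) *
                g (((La i).right s ⊗ₜ[ℂ] (Lb j).right t) ⊗ₜ[ℂ] (Lc u).right v) *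
                h ((ra.right i ⊗ₜ[ℂ] rb.right j) ⊗ₜ[ℂ] rc.right u)
            = ∑ j ∈ rb.index, ∑ s ∈ (La i).index, ∑ u ∈ rc.index, ∑ t ∈ (Lb j).index,
              ∑ v ∈ (Lc u).index, _ :=
              Finset.sum_congr rfl fun j _ => Finset.sum_comm
          _ = ∑ j ∈ rb.index, ∑ s ∈ (La i).index, ∑ t ∈ (Lb j).index, ∑ u ∈ rc.index,
              ∑ v ∈ (Lc u).index, _ :=
              Finset.sum_congr rfl fun j _ => Finset.sum_congr rfl fun s _ =>
                Finset.sum_comm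
          _ = ∑ s ∈ (La i).index, ∑ j ∈ rb.index, ∑ t ∈ (Lb j).index, ∑ u ∈ rc.index,
              ∑ v ∈ (Lc u).index,
              f (((La i).left s ⊗ₜ[ℂ] (Lb j).left t) ⊗ₜ[ℂ] (Lc u).left v) *
                (g (((La i).right s ⊗ₜ[ℂ] (Lb j).right t) ⊗ₜ[ℂ] (Lc u).right v) *
                  h ((ra.right i ⊗ₜ[ℂ] rb.right j) ⊗ₜ[ℂ] rc.right u)) := by
              rw [Finset.sum_comm]
              exact Finset.sum_congr rfl fun s _ => Finset.sum_congr rfl fun j _ =>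
                Finset.sum_congr rfl fun t _ => Finset.sum_congr rfl fun u _ =>
                  Finset.sum_congr rfl fun v _ => by rw [mul_assoc]
    _ = ∑ i ∈ ra.index, ∑ p ∈ (Ra i).index,
          Ta (ra.left i ⊗ₜ[ℂ] ((Ra i).left p ⊗ₜ[ℂ] (Ra i).right p)) :=
        sum_swap_comul₂ Ta a ra La Ra
    _ = ∑ j ∈ rb.index, ∑ t ∈ (Lb j).index,
          Tb ((Lb j).left t ⊗ₜ[ℂ] ((Lb j).right t ⊗ₜ[ℂ] rb.right j)) := by
        simp only [hTa, hTb, LinearMap.sum_apply, triA_tmul, LinearMap.comp_apply,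
          ins₁_apply, ins₂_apply]
        -- order (i,p,j,t,u,v) → (j,t,i,p,u,v)
        exact sum4_reorder ra.index rb.index (fun i => (Ra i).index)
          (fun j => (Lb j).index) _
    _ = ∑ j ∈ rb.index, ∑ q ∈ (Rb j).index,
          Tb (rb.left j ⊗ₜ[ℂ] ((Rb j).left q ⊗ₜ[ℂ] (Rb j).right q)) :=
        sum_swap_comul₂ Tb b rb Lb Rb
    _ = ∑ u ∈ rc.index, ∑ v ∈ (Lc u).index,
          Tc ((Lc u).left v ⊗ₜ[ℂ] ((Lc u).right v ⊗ₜ[ℂ] rc.right u)) := by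
        simp only [hTb, hTc, LinearMap.sum_apply, triA_tmul, LinearMap.comp_apply,
          ins₂_apply, ins₃_apply]
        -- order (j,q,i,p,u,v) → (u,v,i,p,j,q)
        calc ∑ j ∈ rb.index, ∑ q ∈ (Rb j).index, ∑ i ∈ ra.index, ∑ p ∈ (Ra i).index,
              ∑ u ∈ rc.index, ∑ v ∈ (Lc u).index,
              f ((ra.left i ⊗ₜ[ℂ] rb.left j) ⊗ₜ[ℂ] (Lc u).left v) *
                (g (((Ra i).left p ⊗ₜ[ℂ] (Rb j).left q) ⊗ₜ[ℂ] (Lc u).right v) *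
                  h (((Ra i).right p ⊗ₜ[ℂ] (Rb j).right q) ⊗ₜ[ℂ] rc.right u))
            = ∑ i ∈ ra.index, ∑ p ∈ (Ra i).index, ∑ j ∈ rb.index, ∑ q ∈ (Rb j).index,
              ∑ u ∈ rc.index, ∑ v ∈ (Lc u).index, _ :=
              sum4_reorder rb.index ra.index (fun j => (Rb j).index)
                (fun i => (Ra i).index) _
          _ = ∑ i ∈ ra.index, ∑ p ∈ (Ra i).index, ∑ u ∈ rc.index, ∑ v ∈ (Lc u).index,
              ∑ j ∈ rb.index, ∑ q ∈ (Rb j).index,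
              f ((ra.left i ⊗ₜ[ℂ] rb.left j) ⊗ₜ[ℂ] (Lc u).left v) *
                (g (((Ra i).left p ⊗ₜ[ℂ] (Rb j).left q) ⊗ₜ[ℂ] (Lc u).right v) *
                  h (((Ra i).right p ⊗ₜ[ℂ] (Rb j).right q) ⊗ₜ[ℂ] rc.right u)) :=
              Finset.sum_congr rfl fun i _ => Finset.sum_congr rfl fun p _ =>
                sum4_reorder rb.index rc.index (fun j => (Rb j).index)
                  (fun u => (Lc u).index) _
          _ = ∑ u ∈ rc.index, ∑ v ∈ (Lc u).index, ∑ i ∈ ra.index, ∑ p ∈ (Ra i).index,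
              ∑ j ∈ rb.index, ∑ q ∈ (Rb j).index,
              f ((ra.left i ⊗ₜ[ℂ] rb.left j) ⊗ₜ[ℂ] (Lc u).left v) *
                (g (((Ra i).left p ⊗ₜ[ℂ] (Rb j).left q) ⊗ₜ[ℂ] (Lc u).right v) *
                  h (((Ra i).right p ⊗ₜ[ℂ] (Rb j).right q) ⊗ₜ[ℂ] rc.right u)) :=
              sum4_reorder ra.index rc.index (fun i => (Ra i).index)
                (fun u => (Lc u).index) _
    _ = ∑ u ∈ rc.index, ∑ w ∈ (Rc u).index,
          Tc (rc.left u ⊗ₜ[ℂ] ((Rc u).left w ⊗ₜ[ℂ] (Rc u).right w)) :=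
        sum_swap_comul₂ Tc c rc Lc Rc
    _ = cv₃ f (cv₃ g h) ((a ⊗ₜ[ℂ] b) ⊗ₜ[ℂ] c) := by
        rw [cv₃_tmul f (cv₃ g h) a b c ra rb rc]
        have : ∀ i ∈ ra.index, ∀ j ∈ rb.index, ∀ u ∈ rc.index,
            f ((ra.left i ⊗ₜ[ℂ] rb.left j) ⊗ₜ[ℂ] rc.left u) *
              cv₃ g h ((ra.right i ⊗ₜ[ℂ] rb.right j) ⊗ₜ[ℂ] rc.right u)
            = ∑ p ∈ (Ra i).index, ∑ q ∈ (Rb j).index, ∑ w ∈ (Rc u).index,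
                f ((ra.left i ⊗ₜ[ℂ] rb.left j) ⊗ₜ[ℂ] rc.left u) *
                  (g (((Ra i).left p ⊗ₜ[ℂ] (Rb j).left q) ⊗ₜ[ℂ] (Rc u).left w) *
                    h (((Ra i).right p ⊗ₜ[ℂ] (Rb j).right q) ⊗ₜ[ℂ] (Rc u).right w)) := by
          intro i _ j _ u _
          rw [cv₃_tmul g h _ _ _ (Ra i) (Rb j) (Rc u), Finset.mul_sum]
          exact Finset.sum_congr rfl fun p _ => by
            rw [Finset.mul_sum]
            exact Finset.sum_congr rfl fun q _ => by rw [Finset.mul_sum]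
        rw [Finset.sum_congr rfl fun i hi => Finset.sum_congr rfl fun j hj =>
          Finset.sum_congr rfl fun u hu => this i hi j hj u hu]
        simp only [hTc, LinearMap.sum_apply, triA_tmul, LinearMap.comp_apply, ins₃_apply]
        exact (sum6_reorder ra.index rb.index rc.index (fun i => (Ra i).index)
          (fun j => (Rb j).index) (fun u => (Rc u).index)
          (fun i p j q u w =>
            f ((ra.left i ⊗ₜ[ℂ] rb.left j) ⊗ₜ[ℂ] rc.left u) *
              (g (((Ra i).left p ⊗ₜ[ℂ] (Rb j).left q) ⊗ₜ[ℂ] (Rc u).left w) *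
                h (((Ra i).right p ⊗ₜ[ℂ] (Rb j).right q) ⊗ₜ[ℂ] (Rc u).right w))))

end cv3assoc


section bridges
-- counit collapse lemmas
lemma counit_collapse {M : Type*} [AddCommMonoid M] [Module ℂ M] {c : H}
    (r : Coalgebra.Repr ℂ c (H × H)) (f : H →ₗ[ℂ] M) :
    ∑ u ∈ r.index, Coalgebra.counit (R := ℂ) (r.left u) • f (r.right u) = f c := by
  have h := Coalgebra.sum_counit_tmul_eq (R := ℂ) r
  have h2 := congrArg (TensorProduct.lid ℂ H) h
  simp only [map_sum, lid_tmul] at h2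
  calc ∑ u ∈ r.index, Coalgebra.counit (R := ℂ) (r.left u) • f (r.right u)
      = f (∑ u ∈ r.index, Coalgebra.counit (R := ℂ) (r.left u) • r.right u) := by
        simp [map_sum, map_smul]
    _ = f c := by rw [h2]; simp

lemma counit_collapse' {M : Type*} [AddCommMonoid M] [Module ℂ M] {c : H}
    (r : Coalgebra.Repr ℂ c (H × H)) (f : H →ₗ[ℂ] M) :
    ∑ u ∈ r.index, Coalgebra.counit (R := ℂ) (r.right u) • f (r.left u) = f c := by
  have h := Coalgebra.sum_tmul_counit_eq (R := ℂ) r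
  have h2 := congrArg (TensorProduct.rid ℂ H) h
  simp only [map_sum, rid_tmul] at h2
  calc ∑ u ∈ r.index, Coalgebra.counit (R := ℂ) (r.right u) • f (r.left u)
      = f (∑ u ∈ r.index, Coalgebra.counit (R := ℂ) (r.right u) • r.left u) := by
        simp [map_sum, map_smul]
    _ = f c := by rw [h2]; simp

lemma smashMul_eq (σ : H ⊗[ℂ] H →ₗ[ℂ] ℂ) (a b : H) {ι κ : Type*} (sa : Finset ι)
    (sb : Finset κ) (a1 a2 : ι → H) (b1 b2 : κ → H)
    (ha : Coalgebra.comul (R := ℂ) a = ∑ i ∈ sa, a1 i ⊗ₜ[ℂ] a2 i)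
    (hb : Coalgebra.comul (R := ℂ) b = ∑ j ∈ sb, b1 j ⊗ₜ[ℂ] b2 j) :
    smashMul σ (a ⊗ₜ[ℂ] b) = ∑ i ∈ sa, ∑ j ∈ sb, σ (a1 i ⊗ₜ[ℂ] b1 j) • (a2 i * b2 j) := by
  simp only [smashMul, LinearMap.comp_apply, map_tmul, ha, hb, sum_tmul, tmul_sum, map_sum,
    LinearEquiv.coe_coe, tensorTensorTensorComm_tmul, LinearMap.mul'_apply, lid_tmul]
  rw [Finset.sum_comm]

lemma conv₂_eq (σ τ : H ⊗[ℂ] H →ₗ[ℂ] ℂ) (a b : H) (ra : Coalgebra.Repr ℂ a (H × H))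
    (rb : Coalgebra.Repr ℂ b (H × H)) :
    conv₂ σ τ a b = ∑ i ∈ ra.index, ∑ j ∈ rb.index,
      σ (ra.left i ⊗ₜ[ℂ] rb.left j) * τ (ra.right i ⊗ₜ[ℂ] rb.right j) := by
  simp only [conv₂, ← ra.eq, ← rb.eq, sum_tmul, tmul_sum, map_sum, LinearEquiv.coe_coe,
    tensorTensorTensorComm_tmul, map_tmul, LinearMap.mul'_apply]
  rw [Finset.sum_comm]

lemma cocycleLHS_eq (σ : H ⊗[ℂ] H →ₗ[ℂ] ℂ) (a b c : H) (ra : Coalgebra.Repr ℂ a (H × H))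
    (rb : Coalgebra.Repr ℂ b (H × H)) :
    cocycleLHS σ a b c = ∑ i ∈ ra.index, ∑ j ∈ rb.index,
      σ (ra.left i ⊗ₜ[ℂ] rb.left j) * σ ((ra.right i * rb.right j) ⊗ₜ[ℂ] c) := by
  simp only [cocycleLHS, ← ra.eq, ← rb.eq, sum_tmul, tmul_sum, map_sum, LinearEquiv.coe_coe,
    tensorTensorTensorComm_tmul, map_tmul, LinearMap.mul'_apply, LinearMap.comp_apply,
    LinearMap.flip_apply, TensorProduct.mk_apply]
  rw [Finset.sum_comm]

lemma cocycleRHS_eq (σ : H ⊗[ℂ] H →ₗ[ℂ] ℂ) (a b c : H) (rb : Coalgebra.Repr ℂ b (H × H))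
    (rc : Coalgebra.Repr ℂ c (H × H)) :
    cocycleRHS σ a b c = ∑ j ∈ rb.index, ∑ u ∈ rc.index,
      σ (rb.left j ⊗ₜ[ℂ] rc.left u) * σ (a ⊗ₜ[ℂ] (rb.right j * rc.right u)) := by
  simp only [cocycleRHS, ← rb.eq, ← rc.eq, sum_tmul, tmul_sum, map_sum, LinearEquiv.coe_coe,
    tensorTensorTensorComm_tmul, map_tmul, LinearMap.mul'_apply, LinearMap.comp_apply,
    TensorProduct.mk_apply]
  rw [Finset.sum_comm]

lemma comul_mul_repr (a b : H) (ra : Coalgebra.Repr ℂ a (H × H)) (rb : Coalgebra.Repr ℂ b (H × H)) :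
    Coalgebra.comul (R := ℂ) (a * b) = ∑ ij ∈ ra.index ×ˢ rb.index,
      (ra.left ij.1 * rb.left ij.2) ⊗ₜ[ℂ] (ra.right ij.1 * rb.right ij.2) := by
  rw [Bialgebra.comul_mul, ← ra.eq, ← rb.eq, Finset.sum_mul_sum]
  rw [Finset.sum_product]
  exact Finset.sum_congr rfl fun i _ => Finset.sum_congr rfl fun j _ =>
    Algebra.TensorProduct.tmul_mul_tmul _ _ _ _

lemma twistMul_eq (σ σ' : H ⊗[ℂ] H →ₗ[ℂ] ℂ) (a b : H) (ra : Coalgebra.Repr ℂ a (H × H))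
    (rb : Coalgebra.Repr ℂ b (H × H)) (Ra : ∀ i, Coalgebra.Repr ℂ (ra.right i) (H × H))
    (Rb : ∀ j, Coalgebra.Repr ℂ (rb.right j) (H × H)) :
    twistMul σ σ' (a ⊗ₜ[ℂ] b) = ∑ i ∈ ra.index, ∑ j ∈ rb.index,
      ∑ p ∈ (Ra i).index, ∑ q ∈ (Rb j).index,
        σ (ra.left i ⊗ₜ[ℂ] rb.left j) •
          (σ' ((Ra i).right p ⊗ₜ[ℂ] (Rb j).right q) • ((Ra i).left p * (Rb j).left q)) := by
  simp only [twistMul, LinearMap.comp_apply, map_tmul, comul₂_eq_right a ra Ra,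
    comul₂_eq_right b rb Rb, sum_tmul, tmul_sum, map_sum, LinearEquiv.coe_coe,
    tensorTensorTensorComm_tmul, LinearMap.mul'_apply, lid_tmul, rid_tmul, LinearMap.id_coe,
    id_eq]
  rw [Finset.sum_comm]
  refine Finset.sum_congr rfl fun i _ => ?_
  rw [Finset.sum_comm]
  refine Finset.sum_congr rfl fun j _ => ?_
  rw [Finset.sum_comm]

end bridges

section part1
variable (σ : H ⊗[ℂ] H →ₗ[ℂ] ℂ)

noncomputable def σt : H ⊗[ℂ] H →ₗ[ℂ] H := Algebra.linearMap ℂ H ∘ₗ σ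
noncomputable def mH : H ⊗[ℂ] H →ₗ[ℂ] H := LinearMap.mul' ℂ H
noncomputable def m₃ : (H ⊗[ℂ] H) ⊗[ℂ] H →ₗ[ℂ] H :=
  LinearMap.mul' ℂ H ∘ₗ TensorProduct.map (LinearMap.mul' ℂ H) LinearMap.id
noncomputable def u₁ : (H ⊗[ℂ] H) ⊗[ℂ] H →ₗ[ℂ] H :=
  Algebra.linearMap ℂ H ∘ₗ LinearMap.mul' ℂ ℂ ∘ₗ
    TensorProduct.map σ (Coalgebra.counit (R := ℂ))
noncomputable def u₂ : (H ⊗[ℂ] H) ⊗[ℂ] H →ₗ[ℂ] H :=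
  Algebra.linearMap ℂ H ∘ₗ σ ∘ₗ TensorProduct.map (LinearMap.mul' ℂ H) LinearMap.id
noncomputable def v₁ : (H ⊗[ℂ] H) ⊗[ℂ] H →ₗ[ℂ] H :=
  Algebra.linearMap ℂ H ∘ₗ LinearMap.mul' ℂ ℂ ∘ₗ
    TensorProduct.map (Coalgebra.counit (R := ℂ)) σ ∘ₗ
    (TensorProduct.assoc ℂ H H H).toLinearMap
noncomputable def v₂ : (H ⊗[ℂ] H) ⊗[ℂ] H →ₗ[ℂ] H :=
  Algebra.linearMap ℂ H ∘ₗ σ ∘ₗ TensorProduct.map LinearMap.id (LinearMap.mul' ℂ H) ∘ₗ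
    (TensorProduct.assoc ℂ H H H).toLinearMap

lemma algebraMap_mul_eq_smul (c : ℂ) (x : H) : algebraMap ℂ H c * x = c • x :=
  (Algebra.smul_def c x).symm

lemma A1 : cv₃ (u₂ σ) (m₃ (H := H)) =
    smashMul σ ∘ₗ TensorProduct.map (LinearMap.mul' ℂ H) LinearMap.id := by
  apply TensorProduct.ext_threefold
  intro a b c
  have ra := ℛ ℂ a; have rb := ℛ ℂ b; have rc := ℛ ℂ c
  rw [cv₃_tmul _ _ a b c ra rb rc]
  simp only [LinearMap.comp_apply, map_tmul, LinearMap.id_coe, id_eq, LinearMap.mul'_apply]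
  rw [smashMul_eq σ _ c _ rc.index _ _ rc.left rc.right (comul_mul_repr a b ra rb)
    rc.eq.symm, Finset.sum_product]
  exact Finset.sum_congr rfl fun i _ => Finset.sum_congr rfl fun j _ =>
    Finset.sum_congr rfl fun u _ => by
      simp [u₁, u₂, m₃, algebraMap_mul_eq_smul]

lemma A2 : cv₃ (u₁ σ) (smashMul σ ∘ₗ TensorProduct.map (LinearMap.mul' ℂ H) LinearMap.id)
    = smashMul σ ∘ₗ TensorProduct.map (smashMul σ) LinearMap.id := by
  apply TensorProduct.ext_threefold
  intro a b c
  have ra := ℛ ℂ a; have rb := ℛ ℂ b; have rc := ℛ ℂ c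
  rw [cv₃_tmul _ _ a b c ra rb rc]
  have step : ∀ i ∈ ra.index, ∀ j ∈ rb.index,
      ∑ u ∈ rc.index,
        u₁ σ ((ra.left i ⊗ₜ[ℂ] rb.left j) ⊗ₜ[ℂ] rc.left u) *
          (smashMul σ ∘ₗ TensorProduct.map (LinearMap.mul' ℂ H) LinearMap.id)
            ((ra.right i ⊗ₜ[ℂ] rb.right j) ⊗ₜ[ℂ] rc.right u)
      = σ (ra.left i ⊗ₜ[ℂ] rb.left j) •
          smashMul σ ((ra.right i * rb.right j) ⊗ₜ[ℂ] c) := by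
    intro i _ j _
    have hcol := counit_collapse rc (smashMul σ ∘ₗ TensorProduct.mk ℂ H H
      (ra.right i * rb.right j))
    simp only [LinearMap.comp_apply, TensorProduct.mk_apply] at hcol
    rw [← hcol, Finset.smul_sum]
    refine Finset.sum_congr rfl fun u _ => ?_
    simp only [u₁, LinearMap.comp_apply, map_tmul, LinearMap.mul'_apply,
      LinearMap.id_coe, id_eq, Algebra.linearMap_apply, algebraMap_mul_eq_smul, mul_smul]
  rw [Finset.sum_congr rfl fun i hi => Finset.sum_congr rfl fun j hj => step i hi j hj]
  -- RHS
  simp only [LinearMap.comp_apply, map_tmul, LinearMap.id_coe, id_eq]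
  rw [smashMul_eq σ a b ra.index rb.index ra.left ra.right rb.left rb.right
    ra.eq.symm rb.eq.symm, sum_tmul]
  rw [map_sum]
  refine Finset.sum_congr rfl fun i _ => ?_
  rw [sum_tmul, map_sum]
  refine Finset.sum_congr rfl fun j _ => ?_
  rw [← smul_tmul', map_smul]

lemma A3 : cv₃ (v₂ σ) (m₃ (H := H)) =
    smashMul σ ∘ₗ TensorProduct.map LinearMap.id (LinearMap.mul' ℂ H) ∘ₗ
      (TensorProduct.assoc ℂ H H H).toLinearMap := by
  apply TensorProduct.ext_threefold
  intro a b c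
  have ra := ℛ ℂ a; have rb := ℛ ℂ b; have rc := ℛ ℂ c
  rw [cv₃_tmul _ _ a b c ra rb rc]
  simp only [LinearMap.comp_apply, LinearEquiv.coe_coe, assoc_tmul, map_tmul,
    LinearMap.id_coe, id_eq, LinearMap.mul'_apply]
  rw [smashMul_eq σ a _ ra.index _ ra.left ra.right _ _ ra.eq.symm
    (comul_mul_repr b c rb rc)]
  refine Finset.sum_congr rfl fun i _ => ?_
  rw [Finset.sum_product]
  exact Finset.sum_congr rfl fun j _ => Finset.sum_congr rfl fun u _ => by
    simp [v₂, m₃, algebraMap_mul_eq_smul, mul_assoc]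

lemma A4 : cv₃ (v₁ σ) (smashMul σ ∘ₗ TensorProduct.map LinearMap.id (LinearMap.mul' ℂ H) ∘ₗ
      (TensorProduct.assoc ℂ H H H).toLinearMap)
    = smashMul σ ∘ₗ TensorProduct.map LinearMap.id (smashMul σ) ∘ₗ
      (TensorProduct.assoc ℂ H H H).toLinearMap := by
  apply TensorProduct.ext_threefold
  intro a b c
  have ra := ℛ ℂ a; have rb := ℛ ℂ b; have rc := ℛ ℂ c
  rw [cv₃_tmul _ _ a b c ra rb rc]
  set F : H →ₗ[ℂ] H := ∑ j ∈ rb.index, ∑ u ∈ rc.index,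
    σ (rb.left j ⊗ₜ[ℂ] rc.left u) •
      (smashMul σ ∘ₗ (TensorProduct.mk ℂ H H).flip (rb.right j * rc.right u)) with hF
  have step : ∀ i ∈ ra.index,
      ∑ j ∈ rb.index, ∑ u ∈ rc.index,
        v₁ σ ((ra.left i ⊗ₜ[ℂ] rb.left j) ⊗ₜ[ℂ] rc.left u) *
          (smashMul σ ∘ₗ TensorProduct.map LinearMap.id (LinearMap.mul' ℂ H) ∘ₗ
            (TensorProduct.assoc ℂ H H H).toLinearMap)
            ((ra.right i ⊗ₜ[ℂ] rb.right j) ⊗ₜ[ℂ] rc.right u)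
      = Coalgebra.counit (R := ℂ) (ra.left i) • F (ra.right i) := by
    intro i _
    rw [hF]
    simp only [LinearMap.sum_apply, LinearMap.smul_apply, LinearMap.comp_apply,
      LinearMap.flip_apply, TensorProduct.mk_apply, Finset.smul_sum, LinearEquiv.coe_coe,
      assoc_tmul, map_tmul, LinearMap.id_coe, id_eq, LinearMap.mul'_apply, v₁,
      Algebra.linearMap_apply, algebraMap_mul_eq_smul, mul_smul]
  rw [Finset.sum_congr rfl fun i hi => step i hi, counit_collapse ra F]
  -- RHS
  simp only [hF, LinearMap.sum_apply, LinearMap.smul_apply, LinearMap.comp_apply,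
    LinearMap.flip_apply, TensorProduct.mk_apply, LinearEquiv.coe_coe, assoc_tmul,
    map_tmul, LinearMap.id_coe, id_eq]
  rw [smashMul_eq σ b c rb.index rc.index rb.left rb.right rc.left rc.right
    rb.eq.symm rc.eq.symm]
  rw [tmul_sum, map_sum]
  refine (Finset.sum_congr rfl fun j _ => ?_).symm
  rw [tmul_sum, map_sum]
  exact Finset.sum_congr rfl fun u _ => by rw [tmul_smul, map_smul]

lemma A5 (hcoc : IsDualCocycle (H := H) σ) : cv₃ (u₁ σ) (u₂ σ) = cv₃ (v₁ σ) (v₂ σ) := by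
  apply TensorProduct.ext_threefold
  intro a b c
  have ra := ℛ ℂ a; have rb := ℛ ℂ b; have rc := ℛ ℂ c
  rw [cv₃_tmul _ _ a b c ra rb rc, cv₃_tmul _ _ a b c ra rb rc]
  have lhs : ∑ i ∈ ra.index, ∑ j ∈ rb.index, ∑ u ∈ rc.index,
      u₁ σ ((ra.left i ⊗ₜ[ℂ] rb.left j) ⊗ₜ[ℂ] rc.left u) *
        u₂ σ ((ra.right i ⊗ₜ[ℂ] rb.right j) ⊗ₜ[ℂ] rc.right u)
      = algebraMap ℂ H (cocycleLHS σ a b c) := by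
    rw [cocycleLHS_eq σ a b c ra rb, map_sum]
    refine Finset.sum_congr rfl fun i _ => ?_
    rw [map_sum]
    refine Finset.sum_congr rfl fun j _ => ?_
    have hcol := counit_collapse (M := ℂ) rc
      (σ ∘ₗ TensorProduct.mk ℂ H H (ra.right i * rb.right j))
    simp only [LinearMap.comp_apply, TensorProduct.mk_apply, smul_eq_mul] at hcol
    rw [← hcol, Finset.mul_sum, map_sum]
    refine Finset.sum_congr rfl fun u _ => ?_
    simp only [u₁, u₂, LinearMap.comp_apply, map_tmul, LinearMap.mul'_apply,
      LinearMap.id_coe, id_eq, Algebra.linearMap_apply, ← map_mul]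
    rw [mul_assoc]
  have rhs : ∑ i ∈ ra.index, ∑ j ∈ rb.index, ∑ u ∈ rc.index,
      v₁ σ ((ra.left i ⊗ₜ[ℂ] rb.left j) ⊗ₜ[ℂ] rc.left u) *
        v₂ σ ((ra.right i ⊗ₜ[ℂ] rb.right j) ⊗ₜ[ℂ] rc.right u)
      = algebraMap ℂ H (cocycleRHS σ a b c) := by
    rw [cocycleRHS_eq σ a b c rb rc, map_sum]
    rw [Finset.sum_comm]
    refine Finset.sum_congr rfl fun j _ => ?_
    rw [map_sum, Finset.sum_comm]
    refine Finset.sum_congr rfl fun u _ => ?_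
    have hcol := counit_collapse (M := ℂ) ra
      (σ ∘ₗ (TensorProduct.mk ℂ H H).flip (rb.right j * rc.right u))
    simp only [LinearMap.comp_apply, LinearMap.flip_apply, TensorProduct.mk_apply,
      smul_eq_mul] at hcol
    rw [← hcol, Finset.mul_sum, map_sum]
    refine Finset.sum_congr rfl fun i _ => ?_
    simp only [v₁, v₂, LinearMap.comp_apply, LinearEquiv.coe_coe, assoc_tmul, map_tmul,
      LinearMap.mul'_apply, LinearMap.id_coe, id_eq, Algebra.linearMap_apply, ← map_mul]
    ring_nf
  rw [lhs, rhs, hcoc a b c]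

end part1

section part4
variable {A B : Type*} [Ring A] [Algebra ℂ A] [Ring B] [Algebra ℂ B]

lemma mul_algebraMap_eq_smul (c : ℂ) (x : A) : x * algebraMap ℂ A c = c • x := by
  rw [← Algebra.commutes, ← Algebra.smul_def]

noncomputable def e₂ : H ⊗[ℂ] H →ₗ[ℂ] A :=
  Algebra.linearMap ℂ A ∘ₗ LinearMap.mul' ℂ ℂ ∘ₗ
    TensorProduct.map (Coalgebra.counit (R := ℂ)) (Coalgebra.counit (R := ℂ))

lemma cv₂_algHom (φ : A →ₐ[ℂ] B) (f g : H ⊗[ℂ] H →ₗ[ℂ] A) :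
    φ.toLinearMap ∘ₗ cv₂ f g = cv₂ (φ.toLinearMap ∘ₗ f) (φ.toLinearMap ∘ₗ g) := by
  apply TensorProduct.ext'
  intro a b
  have ra := ℛ ℂ a; have rb := ℛ ℂ b
  simp only [LinearMap.comp_apply, cv₂_tmul _ _ a b ra rb, map_sum, AlgHom.toLinearMap_apply,
    map_mul]

lemma cv₂_unit_right (f : H ⊗[ℂ] H →ₗ[ℂ] A) : cv₂ f (e₂ (H := H)) = f := by
  apply TensorProduct.ext'
  intro a b
  have ra := ℛ ℂ a; have rb := ℛ ℂ b
  rw [cv₂_tmul _ _ a b ra rb]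
  have inner : ∀ i ∈ ra.index,
      ∑ j ∈ rb.index, f (ra.left i ⊗ₜ[ℂ] rb.left j) *
        e₂ (A := A) (ra.right i ⊗ₜ[ℂ] rb.right j)
      = Coalgebra.counit (R := ℂ) (ra.right i) • f (ra.left i ⊗ₜ[ℂ] b) := by
    intro i _
    have hcol := counit_collapse' rb (f ∘ₗ TensorProduct.mk ℂ H H (ra.left i))
    simp only [LinearMap.comp_apply, TensorProduct.mk_apply] at hcol
    rw [← hcol, Finset.smul_sum]
    refine Finset.sum_congr rfl fun j _ => ?_
    simp only [e₂, LinearMap.comp_apply, map_tmul, LinearMap.mul'_apply,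
      Algebra.linearMap_apply, mul_algebraMap_eq_smul, mul_smul]
  rw [Finset.sum_congr rfl fun i hi => inner i hi]
  exact counit_collapse' ra (f ∘ₗ (TensorProduct.mk ℂ H H).flip b)

lemma cv₂_unit_left (f : H ⊗[ℂ] H →ₗ[ℂ] A) : cv₂ (e₂ (H := H)) f = f := by
  apply TensorProduct.ext'
  intro a b
  have ra := ℛ ℂ a; have rb := ℛ ℂ b
  rw [cv₂_tmul _ _ a b ra rb]
  have inner : ∀ i ∈ ra.index,
      ∑ j ∈ rb.index, e₂ (A := A) (ra.left i ⊗ₜ[ℂ] rb.left j) *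
        f (ra.right i ⊗ₜ[ℂ] rb.right j)
      = Coalgebra.counit (R := ℂ) (ra.left i) • f (ra.right i ⊗ₜ[ℂ] b) := by
    intro i _
    have hcol := counit_collapse rb (f ∘ₗ TensorProduct.mk ℂ H H (ra.right i))
    simp only [LinearMap.comp_apply, TensorProduct.mk_apply] at hcol
    rw [← hcol, Finset.smul_sum]
    refine Finset.sum_congr rfl fun j _ => ?_
    simp only [e₂, LinearMap.comp_apply, map_tmul, LinearMap.mul'_apply,
      Algebra.linearMap_apply, ← Algebra.smul_def, mul_smul]
    try rw [smul_comm]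
  rw [Finset.sum_congr rfl fun i hi => inner i hi]
  exact counit_collapse ra (f ∘ₗ (TensorProduct.mk ℂ H H).flip b)

variable (σ σ' : H ⊗[ℂ] H →ₗ[ℂ] ℂ)

lemma smash_cv : smashMul σ = cv₂ (σt σ) (mH (H := H)) := by
  apply TensorProduct.ext'
  intro a b
  have ra := ℛ ℂ a; have rb := ℛ ℂ b
  rw [cv₂_tmul _ _ a b ra rb,
    smashMul_eq σ a b ra.index rb.index ra.left ra.right rb.left rb.right ra.eq.symm rb.eq.symm]
  exact Finset.sum_congr rfl fun i _ => Finset.sum_congr rfl fun j _ => by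
    simp [σt, mH, algebraMap_mul_eq_smul]

lemma twist_cv : twistMul σ σ' = cv₂ (σt σ) (cv₂ (mH (H := H)) (σt σ')) := by
  apply TensorProduct.ext'
  intro a b
  have ra := ℛ ℂ a; have rb := ℛ ℂ b
  have Ra : ∀ i, Coalgebra.Repr ℂ (ra.right i) (H × H) := fun i => ℛ ℂ _
  have Rb : ∀ j, Coalgebra.Repr ℂ (rb.right j) (H × H) := fun j => ℛ ℂ _
  rw [twistMul_eq σ σ' a b ra rb Ra Rb, cv₂_tmul _ _ a b ra rb]
  refine Finset.sum_congr rfl fun i _ => Finset.sum_congr rfl fun j _ => ?_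
  rw [cv₂_tmul _ _ _ _ (Ra i) (Rb j)]
  simp only [σt, mH, LinearMap.comp_apply, Algebra.linearMap_apply, LinearMap.mul'_apply,
    algebraMap_mul_eq_smul, mul_algebraMap_eq_smul, Finset.smul_sum]

lemma B4 : cv₂
      ((Algebra.TensorProduct.includeLeft (R := ℂ) (A := H) (B := H)
        (S := ℂ)).toLinearMap ∘ₗ mH (H := H))
      ((Algebra.TensorProduct.includeRight (R := ℂ) (A := H)
        (B := H)).toLinearMap ∘ₗ mH (H := H))
    = Coalgebra.comul (R := ℂ) ∘ₗ mH (H := H) := by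
  apply TensorProduct.ext'
  intro a b
  have ra := ℛ ℂ a; have rb := ℛ ℂ b
  rw [cv₂_tmul _ _ a b ra rb]
  have rhs : (Coalgebra.comul (R := ℂ) ∘ₗ mH (H := H)) (a ⊗ₜ[ℂ] b)
      = ∑ i ∈ ra.index, ∑ j ∈ rb.index,
        (ra.left i * rb.left j) ⊗ₜ[ℂ] (ra.right i * rb.right j) := by
    simp only [LinearMap.comp_apply, mH, LinearMap.mul'_apply, comul_mul_repr a b ra rb,
      Finset.sum_product]
  rw [rhs]
  refine Finset.sum_congr rfl fun i _ => Finset.sum_congr rfl fun j _ => ?_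
  simp [mH, Algebra.TensorProduct.tmul_mul_tmul]

lemma B5 (hinv : IsConvInverse (H := H) σ σ') :
    cv₂ (Algebra.linearMap ℂ (H ⊗[ℂ] H) ∘ₗ σ') (Algebra.linearMap ℂ (H ⊗[ℂ] H) ∘ₗ σ)
      = e₂ (H := H) := by
  apply TensorProduct.ext'
  intro a b
  have ra := ℛ ℂ a; have rb := ℛ ℂ b
  rw [cv₂_tmul _ _ a b ra rb]
  have : ∑ i ∈ ra.index, ∑ j ∈ rb.index,
      (Algebra.linearMap ℂ (H ⊗[ℂ] H) ∘ₗ σ') (ra.left i ⊗ₜ[ℂ] rb.left j) *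
        (Algebra.linearMap ℂ (H ⊗[ℂ] H) ∘ₗ σ) (ra.right i ⊗ₜ[ℂ] rb.right j)
      = algebraMap ℂ (H ⊗[ℂ] H) (conv₂ σ' σ a b) := by
    rw [conv₂_eq σ' σ a b ra rb, map_sum]
    exact Finset.sum_congr rfl fun i _ => by
      rw [map_sum]
      exact Finset.sum_congr rfl fun j _ => by simp [← map_mul]
  rw [this, (hinv a b).2]
  simp [e₂]

lemma comul_comp_σt : (Bialgebra.comulAlgHom ℂ H).toLinearMap ∘ₗ σt σ
    = Algebra.linearMap ℂ (H ⊗[ℂ] H) ∘ₗ σ := by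
  refine LinearMap.ext fun x => ?_
  simp only [LinearMap.comp_apply, σt, Algebra.linearMap_apply, AlgHom.toLinearMap_apply,
    AlgHom.commutes]

lemma comul_comp_mH : (Bialgebra.comulAlgHom ℂ H).toLinearMap ∘ₗ mH (H := H)
    = Coalgebra.comul (R := ℂ) ∘ₗ mH (H := H) := by
  refine LinearMap.ext fun x => ?_
  simp [mH, Bialgebra.comulAlgHom_apply]

lemma ι₁_comp_σt : (Algebra.TensorProduct.includeLeft (R := ℂ) (A := H) (B := H)
    (S := ℂ)).toLinearMap ∘ₗ σt σ = Algebra.linearMap ℂ (H ⊗[ℂ] H) ∘ₗ σ := by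
  refine LinearMap.ext fun x => ?_
  simp [σt]

lemma ι₂_comp_σt : (Algebra.TensorProduct.includeRight (R := ℂ) (A := H)
    (B := H)).toLinearMap ∘ₗ σt σ = Algebra.linearMap ℂ (H ⊗[ℂ] H) ∘ₗ σ := by
  refine LinearMap.ext fun x => ?_
  simp [σt]
  rw [Algebra.algebraMap_eq_smul_one, TensorProduct.tmul_smul, TensorProduct.smul_tmul']

lemma B6 (x y : H) :
    TensorProduct.map (twistMul σ σ') (smashMul σ)
      ((TensorProduct.tensorTensorTensorComm ℂ H H H H)
        ((Coalgebra.comul (R := ℂ) x) ⊗ₜ[ℂ] (Coalgebra.comul (R := ℂ) y)))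
    = cv₂ ((Algebra.TensorProduct.includeLeft (R := ℂ) (A := H) (B := H)
        (S := ℂ)).toLinearMap ∘ₗ twistMul σ σ')
      ((Algebra.TensorProduct.includeRight (R := ℂ) (A := H)
        (B := H)).toLinearMap ∘ₗ smashMul σ) (x ⊗ₜ[ℂ] y) := by
  have rx := ℛ ℂ x; have ry := ℛ ℂ y
  have hδ : (TensorProduct.tensorTensorTensorComm ℂ H H H H)
      ((Coalgebra.comul (R := ℂ) x) ⊗ₜ[ℂ] (Coalgebra.comul (R := ℂ) y))
      = δ₂ (x ⊗ₜ[ℂ] y) := by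
    simp [δ₂]
  rw [hδ, δ₂_tmul x y rx ry, cv₂_tmul _ _ x y rx ry, map_sum]
  refine Finset.sum_congr rfl fun i _ => ?_
  rw [map_sum]
  refine Finset.sum_congr rfl fun j _ => ?_
  simp [Algebra.TensorProduct.tmul_mul_tmul]

lemma part4_key (hinv : IsConvInverse (H := H) σ σ') :
    (Bialgebra.comulAlgHom ℂ H).toLinearMap ∘ₗ smashMul σ
    = cv₂ ((Algebra.TensorProduct.includeLeft (R := ℂ) (A := H) (B := H)
        (S := ℂ)).toLinearMap ∘ₗ twistMul σ σ')
      ((Algebra.TensorProduct.includeRight (R := ℂ) (A := H)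
        (B := H)).toLinearMap ∘ₗ smashMul σ) := by
  have h1 : cv₂ (Algebra.linearMap ℂ (H ⊗[ℂ] H) ∘ₗ σ')
      (cv₂ (Algebra.linearMap ℂ (H ⊗[ℂ] H) ∘ₗ σ)
        ((Algebra.TensorProduct.includeRight (R := ℂ) (A := H)
          (B := H)).toLinearMap ∘ₗ mH (H := H)))
      = (Algebra.TensorProduct.includeRight (R := ℂ) (A := H)
          (B := H)).toLinearMap ∘ₗ mH (H := H) := by
    rw [← cv₂_assoc, B5 σ σ' hinv, cv₂_unit_left]
  rw [smash_cv σ, twist_cv σ σ']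
  rw [cv₂_algHom, cv₂_algHom, cv₂_algHom, cv₂_algHom]
  rw [comul_comp_σt, comul_comp_mH, ι₁_comp_σt σ, ι₁_comp_σt σ', ι₂_comp_σt σ]
  rw [← B4]
  rw [cv₂_assoc, cv₂_assoc, h1]

end part4

/-- the twisted multiplication on `ℂ#_σH` is associative with unit `1#1`,
and `β₁ = Δ : (1#h) ↦ h₍₁₎ ⊗ (1#h₍₂₎)` is an algebra homomorphism
`ℂ#_σH → H^σ ⊗ (ℂ#_σH)`. -/
theorem smash_assoc_unital_and_comul_hom (σ σ' : H ⊗[ℂ] H →ₗ[ℂ] ℂ)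
    (hcoc : IsDualCocycle σ) (hnorm : IsNormalizedDualCocycle σ)
    (hinv : IsConvInverse σ σ') :
    (∀ g h k : H,
      smashMul σ ((smashMul σ (g ⊗ₜ[ℂ] h)) ⊗ₜ[ℂ] k) =
      smashMul σ (g ⊗ₜ[ℂ] (smashMul σ (h ⊗ₜ[ℂ] k)))) ∧
    (∀ h : H, smashMul σ ((1 : H) ⊗ₜ[ℂ] h) = h ∧ smashMul σ (h ⊗ₜ[ℂ] (1 : H)) = h) ∧
    (Coalgebra.comul (R := ℂ) (1 : H) = (1 : H) ⊗ₜ[ℂ] (1 : H)) ∧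
    (∀ g h : H,
      Coalgebra.comul (R := ℂ) (smashMul σ (g ⊗ₜ[ℂ] h)) =
        (TensorProduct.map (twistMul σ σ') (smashMul σ))
          ((TensorProduct.tensorTensorTensorComm ℂ H H H H)
            ((Coalgebra.comul (R := ℂ) g) ⊗ₜ[ℂ] (Coalgebra.comul (R := ℂ) h)))) := by
  refine ⟨?_, ?_, ?_, ?_⟩
  · -- associativity
    intro g h k
    have e : smashMul σ ∘ₗ TensorProduct.map (smashMul σ) LinearMap.id
        = smashMul σ ∘ₗ TensorProduct.map LinearMap.id (smashMul σ) ∘ₗ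
          (TensorProduct.assoc ℂ H H H).toLinearMap := by
      rw [← A2 σ, ← A1 σ, ← cv₃_assoc, A5 σ hcoc, cv₃_assoc, A3 σ, A4 σ]
    have e2 := congrArg
      (fun T : (H ⊗[ℂ] H) ⊗[ℂ] H →ₗ[ℂ] H => T ((g ⊗ₜ[ℂ] h) ⊗ₜ[ℂ] k)) e
    simpa using e2
  · -- unit laws
    intro x
    have rx := ℛ ℂ x
    constructor
    · rw [smashMul_eq σ 1 x ({0} : Finset ℕ) rx.index (fun _ => (1:H)) (fun _ => (1:H))
        rx.left rx.right (by rw [Bialgebra.comul_one, Algebra.TensorProduct.one_def]; simp)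
        rx.eq.symm]
      simp only [Finset.sum_singleton, one_mul]
      have step : ∀ j ∈ rx.index, σ ((1:H) ⊗ₜ[ℂ] rx.left j) • rx.right j
          = Coalgebra.counit (R := ℂ) (rx.left j) • rx.right j := fun j _ => by
        rw [(hnorm _).1]
      rw [Finset.sum_congr rfl step]
      simpa using counit_collapse rx LinearMap.id
    · rw [smashMul_eq σ x 1 rx.index ({0} : Finset ℕ) rx.left rx.right
        (fun _ => (1:H)) (fun _ => (1:H))
        rx.eq.symm (by rw [Bialgebra.comul_one, Algebra.TensorProduct.one_def]; simp)]
      simp only [Finset.sum_singleton, mul_one]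
      have step : ∀ j ∈ rx.index, σ (rx.left j ⊗ₜ[ℂ] (1:H)) • rx.right j
          = Coalgebra.counit (R := ℂ) (rx.left j) • rx.right j := fun j _ => by
        rw [(hnorm _).2]
      rw [Finset.sum_congr rfl step]
      simpa using counit_collapse rx LinearMap.id
  · rw [Bialgebra.comul_one]; exact Algebra.TensorProduct.one_def
  · -- comultiplicativity
    intro g h
    have e2 := congrArg
      (fun T : H ⊗[ℂ] H →ₗ[ℂ] H ⊗[ℂ] H => T (g ⊗ₜ[ℂ] h)) (part4_key σ σ' hinv)
    simp only [LinearMap.comp_apply, AlgHom.toLinearMap_apply,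
      Bialgebra.comulAlgHom_apply] at e2
    rw [B6 σ σ' g h]
    exact e2
end
end

section
/- Let 0 < q ≤ 1 and F ∈ GL(2,ℂ) satisfy F·conj(F) = c·I₂ with c ∈ ℝ. Then there is a unitary v ∈ U(2) such that v F vᵀ equals a scalar multiple of F_{q'} = ((0, |q'|^{1/2}), (−sgn(q')|q'|^{−1/2}, 0)) for some q' ∈ [−1,1]\{0}; i.e. up to the equivalence F₁ ∼ F₂ ⟺ ∃v ∈ U(2): F₁ = vF₂vᵀ (and scaling), every such 2×2 matrix F is equivalent to some F_q. -/
open Matrix Complex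


lemma half_angle (C S : ℝ) (h : C^2 + S^2 = 1) :
    ∃ γ δ : ℝ, γ^2 + δ^2 = 1 ∧ γ^2 - δ^2 = C ∧ 2*γ*δ = S := by
  rcases eq_or_ne C (-1) with hC | hC
  · refine ⟨0, 1, by ring, by rw [hC]; ring, ?_⟩
    have : S^2 = 0 := by nlinarith
    have : S = 0 := by nlinarith
    simp [this]
  · have h1 : 0 < 1 + C := by
      rcases lt_or_ge (-1) C with h' | h'
      · linarith
      · exfalso; have hlt : C < -1 := h'.lt_of_ne hC; nlinarith [sq_nonneg S]
    set γ := Real.sqrt ((1+C)/2) with hγ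
    have hγ2 : γ^2 = (1+C)/2 := Real.sq_sqrt (by linarith)
    have hγpos : 0 < γ := Real.sqrt_pos.2 (by linarith)
    refine ⟨γ, S/(2*γ), ?_, ?_, ?_⟩
    · field_simp
      nlinarith [hγ2]
    · field_simp
      nlinarith [hγ2]
    · field_simp


lemma antidiag_form (c : ℝ) (hc : c ≠ 0) (b d : ℂ)
    (hbd : b * (starRingEnd ℂ) d = (c:ℂ))
    (hle : Complex.normSq b ≤ Complex.normSq d) :
    ∃ q : ℝ, q ∈ Set.Icc (-1:ℝ) 1 ∧ q ≠ 0 ∧ ∃ s : ℂ, s ≠ 0 ∧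
      !![(0:ℂ), b; d, 0] = s • !![0, ((Real.sqrt |q| : ℝ) : ℂ);
            -((Real.sign q : ℝ) : ℂ) / ((Real.sqrt |q| : ℝ) : ℂ), 0] := by
  have hb : b ≠ 0 := by
    rintro rfl
    rw [zero_mul] at hbd
    exact hc (by exact_mod_cast hbd.symm)
  set nb := Complex.normSq b with hnb
  have hnbpos : 0 < nb := Complex.normSq_pos.2 hb
  have hconj : (starRingEnd ℂ) b * d = (c:ℂ) := by
    have h := congrArg (starRingEnd ℂ) hbd
    rw [_root_.map_mul, Complex.conj_conj, Complex.conj_ofReal] at h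
    linear_combination h
  have hkey : d * (nb:ℂ) = (c:ℂ) * b := by
    calc d * (nb:ℂ) = b * ((starRingEnd ℂ) b * d) := by
          rw [← Complex.mul_conj]; ring
      _ = (c:ℂ) * b := by rw [hconj]; ring
  have hns : nb * Complex.normSq d = c^2 := by
    have h := congrArg Complex.normSq hbd
    rw [_root_.map_mul, Complex.normSq_conj, Complex.normSq_ofReal] at h
    rw [← hnb] at h; rw [h]; ring
  have hnb_le : nb ≤ |c| := by
    nlinarith [mul_le_mul_of_nonneg_left hle hnbpos.le, _root_.sq_abs c, abs_nonneg c]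
  have habspos : (0:ℝ) < |c| := abs_pos.2 hc
  refine ⟨-nb / c, ?_, ?_, ?_⟩
  · have : |(-nb / c)| ≤ 1 := by
      rw [abs_div, abs_neg, abs_of_pos hnbpos]
      exact div_le_one_of_le₀ hnb_le (abs_nonneg c)
    exact abs_le.1 this
  · exact div_ne_zero (neg_ne_zero.2 hnbpos.ne') hc
  · have hqabs : |(-nb / c)| = nb / |c| := by
      rw [abs_div, abs_neg, abs_of_pos hnbpos]
    have hsq : Real.sqrt |(-nb / c)| = Real.sqrt nb / Real.sqrt |c| := by
      rw [hqabs, Real.sqrt_div hnbpos.le]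
    set rb := Real.sqrt nb with hrb
    set rc := Real.sqrt |c| with hrc
    have hrbpos : 0 < rb := Real.sqrt_pos.2 hnbpos
    have hrcpos : 0 < rc := Real.sqrt_pos.2 habspos
    have hrb2 : rb^2 = nb := Real.sq_sqrt hnbpos.le
    have hrc2 : rc^2 = |c| := Real.sq_sqrt habspos.le
    have hsc : Real.sign c * |c| = c := by
      rcases hc.lt_or_gt with h | h
      · rw [Real.sign_of_neg h, abs_of_neg h]; ring
      · rw [Real.sign_of_pos h, abs_of_pos h]; ring
    have hsgn : Real.sign (-nb / c) = - Real.sign c := by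
      rcases hc.lt_or_gt with h | h
      · have hq : 0 < -nb / c := by
          rw [div_pos_iff]; right; exact ⟨by linarith, h⟩
        rw [Real.sign_of_pos hq, Real.sign_of_neg h]; ring
      · have hq : -nb / c < 0 := div_neg_of_neg_of_pos (by linarith) h
        rw [Real.sign_of_neg hq, Real.sign_of_pos h]
    have hrbC : (rb:ℂ) ≠ 0 := by exact_mod_cast hrbpos.ne'
    have hrcC : (rc:ℂ) ≠ 0 := by exact_mod_cast hrcpos.ne'
    have hrb2C : (rb:ℂ) * (rb:ℂ) = (nb:ℂ) := by
      have : ((rb^2 : ℝ):ℂ) = ((nb:ℝ):ℂ) := by exact_mod_cast congrArg Complex.ofReal hrb2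
      push_cast at this; linear_combination this
    have hrcsC : ((Real.sign c : ℝ):ℂ) * ((rc:ℂ) * (rc:ℂ)) = (c:ℂ) := by
      have h2 : Real.sign c * (rc^2) = c := by rw [hrc2]; exact hsc
      have : ((Real.sign c * rc^2 : ℝ):ℂ) = ((c:ℝ):ℂ) := by exact_mod_cast congrArg Complex.ofReal h2
      push_cast at this; linear_combination this
    refine ⟨b * rc / rb, div_ne_zero (mul_ne_zero hb hrcC) hrbC, ?_⟩
    have hM : !![(0:ℂ), ((Real.sqrt |(-nb/c)| : ℝ) : ℂ);
            -((Real.sign (-nb/c) : ℝ) : ℂ) / ((Real.sqrt |(-nb/c)| : ℝ) : ℂ), 0]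
        = !![0, (rb:ℂ)/(rc:ℂ); ((Real.sign c : ℝ):ℂ)*(rc:ℂ)/(rb:ℂ), 0] := by
      rw [hsq, hsgn]
      ext i j
      fin_cases i <;> fin_cases j <;> simp <;> push_cast <;> field_simp
    rw [hM]
    ext i j
    fin_cases i <;> fin_cases j <;> simp [Matrix.smul_apply]
    · field_simp
    · field_simp
      linear_combination d*hrb2C + hkey - b*hrcsC


lemma diag_rel (G D : Matrix (Fin 2) (Fin 2) ℂ) (c : ℂ) (hD : D.transpose = D)
    (h1 : G * G.conjTranspose = D) (h2 : G * G.map (starRingEnd ℂ) = c • 1) :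
    D * G * D = c^2 • G ∧ G * D = c • G.transpose := by
  have hGHt : G.conjTranspose = (G.map (starRingEnd ℂ)).transpose := by
    ext i j; simp [Matrix.conjTranspose_apply]
  have hDGt : D * G.transpose = c • G := by
    calc D * G.transpose = G * ((G.map (starRingEnd ℂ)).transpose * G.transpose) := by
          rw [← h1, hGHt]; noncomm_ring
      _ = G * (G * G.map (starRingEnd ℂ)).transpose := by rw [Matrix.transpose_mul]
      _ = c • G := by rw [h2]; simp
  have hGD2 : G * D = c • G.transpose := by
    have h := congrArg Matrix.transpose hDGt
    rw [Matrix.transpose_mul, Matrix.transpose_transpose, Matrix.transpose_smul, hD] at h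
    exact h
  refine ⟨?_, hGD2⟩
  calc D * G * D = D * (G * D) := by noncomm_ring
    _ = D * (c • G.transpose) := by rw [hGD2]
    _ = c • (D * G.transpose) := by rw [Matrix.mul_smul]
    _ = c^2 • G := by rw [hDGt, smul_smul]; ring_nf


lemma imag_of (z : ℂ) (h : z + (starRingEnd ℂ) z = 0) : z = (z.im : ℂ) * Complex.I := by
  have hre : z.re = 0 := by
    have h2 := congrArg Complex.re h
    simp [Complex.add_re, Complex.conj_re] at h2
    linarith [h2]
  apply Complex.ext <;> simp [hre]

lemma pivot_step (τ y : ℂ) (hττ : τ * (starRingEnd ℂ) τ = 1)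
    (h : y * (starRingEnd ℂ) τ + τ * (starRingEnd ℂ) y = 0) :
    ∃ s : ℝ, y = τ * ((s:ℂ) * Complex.I) := by
  refine ⟨(y * (starRingEnd ℂ) τ).im, ?_⟩
  have hz : (y * (starRingEnd ℂ) τ) + (starRingEnd ℂ) (y * (starRingEnd ℂ) τ) = 0 := by
    rw [_root_.map_mul, Complex.conj_conj]
    linear_combination h
  have him := imag_of _ hz
  calc y = (y * (starRingEnd ℂ) τ) * τ := by
        rw [mul_assoc, mul_comm ((starRingEnd ℂ) τ) τ, hττ, mul_one]
    _ = τ * (((y * (starRingEnd ℂ) τ).im : ℂ) * Complex.I) := by linear_combination τ * him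

lemma phase_decomp (x0 x1 x3 : ℂ) (hne : ¬(x0 = 0 ∧ x1 = 0 ∧ x3 = 0))
    (C1 : x0 * (starRingEnd ℂ) x1 + x1 * (starRingEnd ℂ) x0 = 0)
    (C2 : x0 * (starRingEnd ℂ) x3 + x3 * (starRingEnd ℂ) x0 = 0)
    (C3 : x1 * (starRingEnd ℂ) x3 - x3 * (starRingEnd ℂ) x1 = 0) :
    ∃ τ : ℂ, ∃ ρ s1 s3 : ℝ, τ * (starRingEnd ℂ) τ = 1 ∧
      x0 = τ * (ρ:ℂ) ∧ x1 = τ * ((s1:ℂ) * Complex.I) ∧ x3 = τ * ((s3:ℂ) * Complex.I) := by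
  by_cases h0 : x0 = 0
  · by_cases h1 : x1 = 0
    · have h3 : x3 ≠ 0 := by tauto
      set r := ‖x3‖ with hr
      have hrpos : 0 < r := norm_pos_iff.mpr h3
      have hrC : (r:ℂ) ≠ 0 := by exact_mod_cast hrpos.ne'
      have hnorm : x3 * (starRingEnd ℂ) x3 = (r:ℂ) * (r:ℂ) := by
        rw [Complex.mul_conj]
        exact_mod_cast congrArg Complex.ofReal (Complex.norm_mul_self_eq_normSq x3).symm
      set τ := x3 / ((r:ℂ) * Complex.I) with hτ
      have hττ : τ * (starRingEnd ℂ) τ = 1 := by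
        rw [hτ, map_div₀, _root_.map_mul, Complex.conj_ofReal, Complex.conj_I]
        field_simp
        linear_combination -hnorm - ((r:ℂ)^2) * Complex.I_sq
      refine ⟨τ, 0, 0, r, hττ, by simp [h0], by simp [h1], ?_⟩
      rw [hτ]
      field_simp
    · set r := ‖x1‖ with hr
      have hrpos : 0 < r := norm_pos_iff.mpr h1
      have hrC : (r:ℂ) ≠ 0 := by exact_mod_cast hrpos.ne'
      have hnorm : x1 * (starRingEnd ℂ) x1 = (r:ℂ) * (r:ℂ) := by
        rw [Complex.mul_conj]
        exact_mod_cast congrArg Complex.ofReal (Complex.norm_mul_self_eq_normSq x1).symm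
      set τ := x1 / ((r:ℂ) * Complex.I) with hτ
      have hττ : τ * (starRingEnd ℂ) τ = 1 := by
        rw [hτ, map_div₀, _root_.map_mul, Complex.conj_ofReal, Complex.conj_I]
        field_simp
        linear_combination -hnorm - ((r:ℂ)^2) * Complex.I_sq
      have hx1 : x1 = τ * ((r:ℂ) * Complex.I) := by rw [hτ]; field_simp
      have hconjτ : (starRingEnd ℂ) τ = (starRingEnd ℂ) x1 / ((r:ℂ) * (-Complex.I)) := by
        rw [hτ, map_div₀, _root_.map_mul, Complex.conj_ofReal, Complex.conj_I]
      obtain ⟨s3, hs3⟩ := pivot_step τ x3 hττ (by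
        rw [hτ, hconjτ]
        field_simp
        linear_combination C3)
      exact ⟨τ, 0, r, s3, hττ, by simp [h0], hx1, hs3⟩
  · set r := ‖x0‖ with hr
    have hrpos : 0 < r := norm_pos_iff.mpr h0
    have hrC : (r:ℂ) ≠ 0 := by exact_mod_cast hrpos.ne'
    have hnorm : x0 * (starRingEnd ℂ) x0 = (r:ℂ) * (r:ℂ) := by
      rw [Complex.mul_conj]
      exact_mod_cast congrArg Complex.ofReal (Complex.norm_mul_self_eq_normSq x0).symm
    set τ := x0 / (r:ℂ) with hτ
    have hττ : τ * (starRingEnd ℂ) τ = 1 := by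
      rw [hτ, map_div₀, Complex.conj_ofReal]
      field_simp
      linear_combination hnorm
    have hx0 : x0 = τ * (r:ℂ) := by rw [hτ]; field_simp
    have hconjτ : (starRingEnd ℂ) τ = (starRingEnd ℂ) x0 / (r:ℂ) := by
      rw [hτ, map_div₀, Complex.conj_ofReal]
    obtain ⟨s1, hs1⟩ := pivot_step τ x1 hττ (by
      rw [hτ, hconjτ]
      field_simp
      linear_combination C1)
    obtain ⟨s3, hs3⟩ := pivot_step τ x3 hττ (by
      rw [hτ, hconjτ]
      field_simp
      linear_combination C2)
    exact ⟨τ, r, s1, s3, hττ, hx0, hs1, hs3⟩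


def goodForm (A : Matrix (Fin 2) (Fin 2) ℂ) : Prop :=
  ∃ v ∈ Matrix.unitaryGroup (Fin 2) ℂ, ∃ q : ℝ,
    q ∈ Set.Icc (-1 : ℝ) 1 ∧ q ≠ 0 ∧ ∃ s : ℂ, s ≠ 0 ∧
      v * A * v.transpose =
        s • !![0, ((Real.sqrt |q| : ℝ) : ℂ);
               -((Real.sign q : ℝ) : ℂ) / ((Real.sqrt |q| : ℝ) : ℂ), 0]

lemma goodForm_conj (A v : Matrix (Fin 2) (Fin 2) ℂ)
    (hv : v ∈ Matrix.unitaryGroup (Fin 2) ℂ)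
    (h : goodForm (v * A * v.transpose)) : goodForm A := by
  obtain ⟨w, hw, q, hq1, hq2, s, hs, heq⟩ := h
  refine ⟨w * v, mul_mem hw hv, q, hq1, hq2, s, hs, ?_⟩
  rw [Matrix.transpose_mul, ← heq]; noncomm_ring

lemma goodForm_self {A : Matrix (Fin 2) (Fin 2) ℂ} (q : ℝ)
    (hq1 : q ∈ Set.Icc (-1 : ℝ) 1) (hq2 : q ≠ 0) (s : ℂ) (hs : s ≠ 0)
    (h : A = s • !![0, ((Real.sqrt |q| : ℝ) : ℂ);
               -((Real.sign q : ℝ) : ℂ) / ((Real.sqrt |q| : ℝ) : ℂ), 0]) :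
    goodForm A :=
  ⟨1, one_mem _, q, hq1, hq2, s, hs, by
    rw [Matrix.transpose_one, mul_one, one_mul]; exact h⟩

lemma Mneg1 : !![0, ((Real.sqrt |(-1:ℝ)| : ℝ) : ℂ);
    -((Real.sign (-1:ℝ) : ℝ) : ℂ) / ((Real.sqrt |(-1:ℝ)| : ℝ) : ℂ), 0]
    = !![(0:ℂ), 1; 1, 0] := by
  have h1 : |(-1:ℝ)| = 1 := by norm_num
  have h2 : Real.sign (-1:ℝ) = -1 := Real.sign_of_neg (by norm_num)
  rw [h1, h2, Real.sqrt_one]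
  norm_num

lemma M1 : !![0, ((Real.sqrt |(1:ℝ)| : ℝ) : ℂ);
    -((Real.sign (1:ℝ) : ℝ) : ℂ) / ((Real.sqrt |(1:ℝ)| : ℝ) : ℂ), 0]
    = !![(0:ℂ), 1; -1, 0] := by
  have h1 : |(1:ℝ)| = 1 := by norm_num
  have h2 : Real.sign (1:ℝ) = 1 := Real.sign_of_pos (by norm_num)
  rw [h1, h2, Real.sqrt_one]
  norm_num


lemma case_A (c : ℝ) (hc : c ≠ 0) (b d : ℂ)
    (hbd : b * (starRingEnd ℂ) d = (c:ℂ)) : goodForm !![(0:ℂ), b; d, 0] := by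
  rcases le_total (Complex.normSq b) (Complex.normSq d) with hle | hle
  · obtain ⟨q, hq1, hq2, s, hs, heq⟩ := antidiag_form c hc b d hbd hle
    exact goodForm_self q hq1 hq2 s hs heq
  · have hbd' : d * (starRingEnd ℂ) b = (c:ℂ) := by
      have h := congrArg (starRingEnd ℂ) hbd
      rw [_root_.map_mul, Complex.conj_conj, Complex.conj_ofReal] at h
      linear_combination h
    set v : Matrix (Fin 2) (Fin 2) ℂ := !![0, 1; 1, 0] with hv
    have hvmem : v ∈ Matrix.unitaryGroup (Fin 2) ℂ := by
      rw [Matrix.mem_unitaryGroup_iff]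
      ext i j
      fin_cases i <;> fin_cases j <;>
        simp [hv, Matrix.mul_apply, Fin.sum_univ_two, Matrix.one_apply, Matrix.star_apply,
          Matrix.conjTranspose_apply]
    apply goodForm_conj _ v hvmem
    have hvt : v.transpose = v := by
      ext i j
      fin_cases i <;> fin_cases j <;> simp [hv]
    have hswap : v * !![(0:ℂ), b; d, 0] * v.transpose = !![(0:ℂ), d; b, 0] := by
      rw [hvt]
      ext i j
      fin_cases i <;> fin_cases j <;>
        simp [hv, Matrix.mul_apply, Fin.sum_univ_two, Matrix.transpose_apply]
    rw [hswap]
    obtain ⟨q, hq1, hq2, s, hs, heq⟩ := antidiag_form c hc d b hbd' hle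
    exact goodForm_self q hq1 hq2 s hs heq

lemma case_B1 (c : ℝ) (hc : c ≠ 0) (b : ℂ) (hb : b ≠ 0) :
    goodForm !![(0:ℂ), b; -b, 0] := by
  apply goodForm_self 1 (Set.mem_Icc.2 ⟨by norm_num, le_refl 1⟩) one_ne_zero b hb
  rw [M1]
  ext i j
  fin_cases i <;> fin_cases j <;> simp

set_option maxHeartbeats 2000000 in
lemma case_B2 (c : ℝ) (hcpos : 0 < c) (a b e : ℂ)
    (h00 : a * (starRingEnd ℂ) a + b * (starRingEnd ℂ) b = (c:ℂ))
    (h01 : a * (starRingEnd ℂ) b + b * (starRingEnd ℂ) e = 0)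
    (h11 : b * (starRingEnd ℂ) b + e * (starRingEnd ℂ) e = (c:ℂ)) :
    goodForm !![a, b; b, e] := by
  have hmem : (-1:ℝ) ∈ Set.Icc (-1:ℝ) 1 := Set.mem_Icc.2 ⟨le_refl _, by norm_num⟩
  have h01c : (starRingEnd ℂ) a * b + (starRingEnd ℂ) b * e = 0 := by
    have h := congrArg (starRingEnd ℂ) h01
    simpa [map_add, _root_.map_mul] using h
  have hsub : a * (starRingEnd ℂ) a - e * (starRingEnd ℂ) e = 0 := by
    linear_combination h00 - h11
  have hne : ¬((a+e)/2 = 0 ∧ b = 0 ∧ (a-e)/2 = 0) := by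
    rintro ⟨u, v, w⟩
    have ha0 : a = 0 := by linear_combination u + w
    have hb0 : b = 0 := v
    rw [ha0, hb0] at h00
    simp at h00
    exact hcpos.ne' (by exact_mod_cast h00.symm)
  obtain ⟨τ, ρ, s1, s3, hττ, hx0, hx1, hx3⟩ :=
    phase_decomp ((a+e)/2) b ((a-e)/2) hne
      (by
        have hc1 : (starRingEnd ℂ) ((a+e)/2) = ((starRingEnd ℂ) a + (starRingEnd ℂ) e)/2 := by
          rw [map_div₀, map_add, map_ofNat]
        rw [hc1]
        linear_combination h01/2 + h01c/2)
      (by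
        have hc1 : (starRingEnd ℂ) ((a+e)/2) = ((starRingEnd ℂ) a + (starRingEnd ℂ) e)/2 := by
          rw [map_div₀, map_add, map_ofNat]
        have hc3 : (starRingEnd ℂ) ((a-e)/2) = ((starRingEnd ℂ) a - (starRingEnd ℂ) e)/2 := by
          rw [map_div₀, map_sub, map_ofNat]
        rw [hc1, hc3]
        linear_combination hsub/2)
      (by
        have hc3 : (starRingEnd ℂ) ((a-e)/2) = ((starRingEnd ℂ) a - (starRingEnd ℂ) e)/2 := by
          rw [map_div₀, map_sub, map_ofNat]
        rw [hc3]
        linear_combination h01c/2 - h01/2)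
  have ha : a = τ*(ρ:ℂ) + τ*((s3:ℂ)*Complex.I) := by linear_combination hx0 + hx3
  have he : e = τ*(ρ:ℂ) - τ*((s3:ℂ)*Complex.I) := by linear_combination hx0 - hx3
  have hb : b = τ*((s1:ℂ)*Complex.I) := hx1
  have hac : (starRingEnd ℂ) a
      = (starRingEnd ℂ) τ*(ρ:ℂ) - (starRingEnd ℂ) τ*((s3:ℂ)*Complex.I) := by
    have h := congrArg (starRingEnd ℂ) ha
    simpa [map_add, _root_.map_mul, Complex.conj_ofReal, Complex.conj_I, sub_eq_add_neg] using h
  have hec : (starRingEnd ℂ) e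
      = (starRingEnd ℂ) τ*(ρ:ℂ) + (starRingEnd ℂ) τ*((s3:ℂ)*Complex.I) := by
    have h := congrArg (starRingEnd ℂ) he
    simpa [map_sub, _root_.map_mul, Complex.conj_ofReal, Complex.conj_I] using h
  have hbc : (starRingEnd ℂ) b = -((starRingEnd ℂ) τ*((s1:ℂ)*Complex.I)) := by
    have h := congrArg (starRingEnd ℂ) hb
    simpa [_root_.map_mul, Complex.conj_ofReal, Complex.conj_I] using h
  have hmag : ρ^2 + s1^2 + s3^2 = c := by
    have hC : ((ρ^2 + s1^2 + s3^2 : ℝ):ℂ) = (c:ℂ) := by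
      push_cast
      rw [hac, hbc, ha, hb] at h00
      linear_combination h00 - ((ρ:ℂ)^2)*hττ
        + ((s1:ℂ)^2+(s3:ℂ)^2)*Complex.I_sq + ((s1:ℂ)^2+(s3:ℂ)^2)*Complex.I^2*hττ
    exact_mod_cast hC
  have hτ0 : τ ≠ 0 := by
    intro h; rw [h] at hττ; simp at hττ
  by_cases hs13 : s1 = 0 ∧ s3 = 0
  · obtain ⟨hs1, hs3⟩ := hs13
    have hb0 : b = 0 := by rw [hb, hs1]; simp
    have ha' : a = τ*(ρ:ℂ) := by rw [ha, hs3]; simp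
    have he' : e = τ*(ρ:ℂ) := by rw [he, hs3]; simp
    have hρ2 : ρ^2 = c := by rw [← hmag, hs1, hs3]; ring
    have hρ0 : ρ ≠ 0 := by
      intro h; rw [h] at hρ2; simp at hρ2; exact hcpos.ne' hρ2.symm
    set z : ℝ := (Real.sqrt 2)⁻¹ with hz
    have h2 : (Real.sqrt 2)^2 = 2 := Real.sq_sqrt (by norm_num)
    have hzz : z^2 = 1/2 := by rw [hz, ← one_div, div_pow, h2]; norm_num
    have hzzC : (z:ℂ)*(z:ℂ) = 1/2 := by
      have := congrArg (Complex.ofReal) hzz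
      push_cast at this; linear_combination this
    set v : Matrix (Fin 2) (Fin 2) ℂ := !![(z:ℂ), (z:ℂ)*Complex.I; (z:ℂ)*Complex.I, (z:ℂ)] with hv
    have hvmem : v ∈ Matrix.unitaryGroup (Fin 2) ℂ := by
      rw [Matrix.mem_unitaryGroup_iff]
      ext i j
      fin_cases i <;> fin_cases j <;>
        simp [hv, Matrix.mul_apply, Fin.sum_univ_two, Matrix.one_apply, Matrix.star_apply,
          Matrix.conjTranspose_apply, Complex.conj_ofReal] <;>
        first
          | linear_combination -hzzC - Complex.I^2*hzzC - Complex.I_sq/2 + (z:ℂ)^2*Complex.I_sq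
          | linear_combination hzzC + Complex.I^2*hzzC + Complex.I_sq/2 - (z:ℂ)^2*Complex.I_sq
          | linear_combination 3*hzzC + Complex.I^2*hzzC + Complex.I_sq/2 - 2*(z:ℂ)^2*Complex.I_sq
    apply goodForm_conj _ v hvmem
    apply goodForm_self (-1:ℝ) hmem (by norm_num) (τ*(ρ:ℂ)*Complex.I)
      (mul_ne_zero (mul_ne_zero hτ0 (by exact_mod_cast hρ0)) Complex.I_ne_zero)
    rw [Mneg1]
    have hvt : v.transpose = v := by
      ext i j; fin_cases i <;> fin_cases j <;> simp [hv]
    rw [hvt]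
    ext i j
    fin_cases i <;> fin_cases j <;>
      simp [hv, ha', he', hb0, Matrix.mul_apply, Fin.sum_univ_two, Matrix.transpose_apply,
        Matrix.smul_apply, smul_eq_mul] <;>
      first
        | linear_combination ((z:ℂ)^2*τ*(ρ:ℂ))*Complex.I_sq
        | linear_combination (2*τ*(ρ:ℂ)*Complex.I)*hzzC
  · have hσ2pos : 0 < s1^2 + s3^2 := by
      rcases not_and_or.1 hs13 with h | h
      · have h2 : 0 < s1^2 := by rcases (show s1 ≠ 0 from h).lt_or_gt with hl | hl <;> nlinarith
        nlinarith [sq_nonneg s3]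
      · have h2 : 0 < s3^2 := by rcases (show s3 ≠ 0 from h).lt_or_gt with hl | hl <;> nlinarith
        nlinarith [sq_nonneg s1]
    set σ := Real.sqrt (s1^2+s3^2) with hσdef
    have hσpos : 0 < σ := Real.sqrt_pos.2 hσ2pos
    have hσ2 : σ^2 = s1^2+s3^2 := Real.sq_sqrt hσ2pos.le
    have hσne : σ ≠ 0 := hσpos.ne'
    obtain ⟨γ, δ, hγδ, hC, hS⟩ := half_angle (s1/σ) (-s3/σ)
      (by field_simp; first | linear_combination hσ2 | linear_combination -hσ2 | linear_combination 2*hσ2 | linear_combination -2*hσ2)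
    have r1 : (γ^2-δ^2)*s3 + 2*γ*δ*s1 = 0 := by
      rw [hC, hS]; field_simp; try ring
    have r2 : (γ^2-δ^2)*s1 - 2*γ*δ*s3 = σ := by
      rw [hC, hS]; field_simp; first | linear_combination hσ2 | linear_combination -hσ2
    have hγδC : ((γ:ℂ))^2 + ((δ:ℂ))^2 = 1 := by exact_mod_cast hγδ
    have r1C : (((γ:ℂ))^2-((δ:ℂ))^2)*(s3:ℂ) + 2*(γ:ℂ)*(δ:ℂ)*(s1:ℂ) = 0 := by exact_mod_cast r1
    have r2C : (((γ:ℂ))^2-((δ:ℂ))^2)*(s1:ℂ) - 2*(γ:ℂ)*(δ:ℂ)*(s3:ℂ) = (σ:ℂ) := by exact_mod_cast r2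
    set R : Matrix (Fin 2) (Fin 2) ℂ := !![(γ:ℂ), (δ:ℂ); -(δ:ℂ), (γ:ℂ)] with hR
    have hRmem : R ∈ Matrix.unitaryGroup (Fin 2) ℂ := by
      rw [Matrix.mem_unitaryGroup_iff]
      ext i j
      fin_cases i <;> fin_cases j <;>
        simp [hR, Matrix.mul_apply, Fin.sum_univ_two, Matrix.one_apply, Matrix.star_apply,
          Matrix.conjTranspose_apply, Complex.conj_ofReal] <;>
        first
          | linear_combination hγδC
          | linear_combination -hγδC
          | ring
    have hRt : R.transpose = !![(γ:ℂ), -(δ:ℂ); (δ:ℂ), (γ:ℂ)] := by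
      ext i j; fin_cases i <;> fin_cases j <;> simp [hR]
    have hRA : R * !![a, b; b, e] * R.transpose
        = !![τ*(ρ:ℂ), τ*(σ:ℂ)*Complex.I; τ*(σ:ℂ)*Complex.I, τ*(ρ:ℂ)] := by
      rw [hRt]
      ext i j
      fin_cases i <;> fin_cases j <;>
        simp [hR, ha, hb, he, Matrix.mul_apply, Fin.sum_univ_two] <;>
        first
          | linear_combination (τ*Complex.I)*r1C + (τ*(ρ:ℂ))*hγδC
          | linear_combination -(τ*Complex.I)*r1C + (τ*(ρ:ℂ))*hγδC
          | linear_combination (τ*Complex.I)*r2C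
          | linear_combination -(τ*Complex.I)*r2C
    set rc := Real.sqrt c with hrcdef
    have hrcpos : 0 < rc := Real.sqrt_pos.2 hcpos
    have hrc2 : rc^2 = c := Real.sq_sqrt hcpos.le
    have hrcne : rc ≠ 0 := hrcpos.ne'
    have hσρ : σ^2 + ρ^2 = c := by rw [hσ2]; linarith [hmag]
    obtain ⟨γ₂, δ₂, hγδ2, hC2, hS2⟩ := half_angle (σ/rc) (ρ/rc)
      (by field_simp; first | linear_combination hσρ - hrc2 | linear_combination hrc2 - hσρ | linear_combination 2*hσρ - 2*hrc2 | linear_combination 2*hrc2 - 2*hσρ)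
    have r3 : ρ*(γ₂^2-δ₂^2) - 2*γ₂*δ₂*σ = 0 := by
      rw [hC2, hS2]; field_simp; try ring
    have r4 : σ*(γ₂^2-δ₂^2) + 2*γ₂*δ₂*ρ = rc := by
      rw [hC2, hS2]; field_simp; first | linear_combination hrc2 - hσρ | linear_combination hσρ - hrc2
    have hγδ2C : ((γ₂:ℂ))^2 + ((δ₂:ℂ))^2 = 1 := by exact_mod_cast hγδ2
    have r3C : (ρ:ℂ)*(((γ₂:ℂ))^2-((δ₂:ℂ))^2) - 2*(γ₂:ℂ)*(δ₂:ℂ)*(σ:ℂ) = 0 := by exact_mod_cast r3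
    have r4C : (σ:ℂ)*(((γ₂:ℂ))^2-((δ₂:ℂ))^2) + 2*(γ₂:ℂ)*(δ₂:ℂ)*(ρ:ℂ) = (rc:ℂ) := by exact_mod_cast r4
    set W : Matrix (Fin 2) (Fin 2) ℂ := !![(γ₂:ℂ), (δ₂:ℂ)*Complex.I; (δ₂:ℂ)*Complex.I, (γ₂:ℂ)] with hW
    have hWmem : W ∈ Matrix.unitaryGroup (Fin 2) ℂ := by
      rw [Matrix.mem_unitaryGroup_iff]
      ext i j
      fin_cases i <;> fin_cases j <;>
        simp [hW, Matrix.mul_apply, Fin.sum_univ_two, Matrix.one_apply, Matrix.star_apply,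
          Matrix.conjTranspose_apply, Complex.conj_ofReal] <;>
        first
          | linear_combination hγδ2C - ((δ₂:ℂ))^2*Complex.I_sq
          | linear_combination -hγδ2C + ((δ₂:ℂ))^2*Complex.I_sq
          | ring
    have hWt : W.transpose = W := by
      ext i j; fin_cases i <;> fin_cases j <;> simp [hW]
    have hWA : W * !![τ*(ρ:ℂ), τ*(σ:ℂ)*Complex.I; τ*(σ:ℂ)*Complex.I, τ*(ρ:ℂ)] * W.transpose
        = (τ*Complex.I*(rc:ℂ)) • !![(0:ℂ), 1; 1, 0] := by
      rw [hWt]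
      ext i j
      fin_cases i <;> fin_cases j <;>
        simp [hW, Matrix.mul_apply, Fin.sum_univ_two, Matrix.smul_apply, smul_eq_mul] <;>
        first
          | linear_combination τ*r3C + (τ*(ρ:ℂ)*(δ₂:ℂ)^2 + 2*(γ₂:ℂ)*(δ₂:ℂ)*τ*(σ:ℂ))*Complex.I_sq
          | linear_combination (τ*Complex.I)*r4C + (τ*Complex.I*(δ₂:ℂ)^2*(σ:ℂ))*Complex.I_sq
    apply goodForm_conj _ R hRmem
    rw [hRA]
    apply goodForm_conj _ W hWmem
    rw [hWA]
    apply goodForm_self (-1:ℝ) hmem (by norm_num) (τ*Complex.I*(rc:ℂ))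
      (mul_ne_zero (mul_ne_zero hτ0 Complex.I_ne_zero) (by exact_mod_cast hrcne))
    rw [Mneg1]


set_option maxHeartbeats 2000000 in
/-- every `F ∈ GL(2,ℂ)` with `F·conj(F) = c·I₂`, `c ∈ ℝ`, is equivalent —
under `F₁ ∼ F₂ ⟺ ∃ v ∈ U(2), F₁ = v F₂ vᵀ`, up to scaling — to the matrix
`F_q = ((0, |q|^{1/2}), (−sgn(q)|q|^{−1/2}, 0))` for some `q ∈ [−1,1] \ {0}`. -/
theorem gl2_normal_form (F : Matrix (Fin 2) (Fin 2) ℂ) (hF : IsUnit F.det)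
    (c : ℝ) (hc : F * F.map (starRingEnd ℂ) = (c : ℂ) • (1 : Matrix (Fin 2) (Fin 2) ℂ)) :
    ∃ v ∈ Matrix.unitaryGroup (Fin 2) ℂ, ∃ q : ℝ,
      q ∈ Set.Icc (-1 : ℝ) 1 ∧ q ≠ 0 ∧
      ∃ s : ℂ, s ≠ 0 ∧
        v * F * v.transpose =
          s • !![0, ((Real.sqrt |q| : ℝ) : ℂ);
                 -((Real.sign q : ℝ) : ℂ) / ((Real.sqrt |q| : ℝ) : ℂ), 0] := by
  classical
  have hdet : F.det ≠ 0 := by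
    simpa [isUnit_iff_ne_zero] using hF
  -- c ≠ 0
  have hc0 : c ≠ 0 := by
    intro h
    rw [h] at hc
    have := congrArg Matrix.det hc
    rw [Matrix.det_mul] at this
    simp at this
    rcases this with h1 | h1
    · exact hdet h1
    · have : ((starRingEnd ℂ).mapMatrix F).det = (starRingEnd ℂ) F.det :=
        ((starRingEnd ℂ).map_det F).symm
      rw [show (starRingEnd ℂ).mapMatrix F = F.map (starRingEnd ℂ) from rfl] at this
      rw [h1] at this
      exact hdet (by simpa using (congrArg (starRingEnd ℂ) this).symm)
  have hH : (F * F.conjTranspose).IsHermitian := Matrix.isHermitian_mul_conjTranspose_self F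
  set U : Matrix (Fin 2) (Fin 2) ℂ := (Matrix.IsHermitian.eigenvectorUnitary hH : Matrix (Fin 2) (Fin 2) ℂ) with hUdef
  have hUmem : U ∈ Matrix.unitaryGroup (Fin 2) ℂ := SetLike.coe_mem _
  have hU1 : U * star U = 1 := Matrix.mem_unitaryGroup_iff.1 hUmem
  have hU2 : star U * U = 1 := Matrix.mem_unitaryGroup_iff'.1 hUmem
  have hspec : F * F.conjTranspose =
      U * Matrix.diagonal (RCLike.ofReal ∘ hH.eigenvalues) * star U :=
    Matrix.IsHermitian.spectral_theorem hH
  set v₁ : Matrix (Fin 2) (Fin 2) ℂ := star U with hv₁def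
  have hv₁mem : v₁ ∈ Matrix.unitaryGroup (Fin 2) ℂ := Unitary.star_mem hUmem
  set G : Matrix (Fin 2) (Fin 2) ℂ := v₁ * F * v₁.transpose with hGdef
  -- map star facts
  have hmap1 : (star U).map (starRingEnd ℂ) = U.transpose := by
    ext i j; simp [Matrix.conjTranspose_apply]
  have hmap2 : ((star U).transpose).map (starRingEnd ℂ) = U := by
    ext i j; simp [Matrix.conjTranspose_apply]
  have hGc : G * G.map (starRingEnd ℂ) = (c : ℂ) • 1 := by
    have hmapG : G.map (starRingEnd ℂ)
        = U.transpose * F.map (starRingEnd ℂ) * U := by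
      rw [hGdef]
      rw [Matrix.map_mul, Matrix.map_mul, hmap1, hmap2]
    rw [hmapG, hGdef]
    have h1 : (star U).transpose * U.transpose = 1 := by
      rw [← Matrix.transpose_mul, hU1, Matrix.transpose_one]
    calc v₁ * F * v₁.transpose * (U.transpose * F.map (starRingEnd ℂ) * U)
        = star U * (F * ((star U).transpose * U.transpose) * F.map (starRingEnd ℂ)) * U := by
          rw [hv₁def]; noncomm_ring
      _ = star U * (F * F.map (starRingEnd ℂ)) * U := by rw [h1]; noncomm_ring
      _ = (c:ℂ) • 1 := by rw [hc, Matrix.mul_smul, Matrix.smul_mul, mul_one, hU2]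
  have hGD : G * G.conjTranspose = Matrix.diagonal (fun i => ((hH.eigenvalues i : ℝ) : ℂ)) := by
    have hGH : G.conjTranspose = U.transpose * F.conjTranspose * U := by
      rw [hGdef, Matrix.conjTranspose_mul, Matrix.conjTranspose_mul]
      have e1 : v₁.transpose.conjTranspose = U.transpose := by
        ext i j; simp [Matrix.conjTranspose_apply, Matrix.transpose_apply, hv₁def]
      have e2 : v₁.conjTranspose = U := by
        ext i j; simp [Matrix.conjTranspose_apply, hv₁def]
      rw [e1, e2]; noncomm_ring
    have h1 : v₁.transpose * U.transpose = 1 := by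
      rw [← Matrix.transpose_mul, hU1, Matrix.transpose_one]
    have hdiag : Matrix.diagonal (RCLike.ofReal ∘ hH.eigenvalues)
        = Matrix.diagonal (fun i => ((hH.eigenvalues i : ℝ) : ℂ)) := rfl
    calc G * G.conjTranspose
        = v₁ * (F * (v₁.transpose * U.transpose) * F.conjTranspose) * U := by
          rw [hGH, hGdef]; noncomm_ring
      _ = v₁ * (F * F.conjTranspose) * U := by rw [h1]; noncomm_ring
      _ = v₁ * (U * Matrix.diagonal (RCLike.ofReal ∘ hH.eigenvalues) * v₁) * U := by
          rw [← hspec]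
      _ = (v₁ * U) * Matrix.diagonal (RCLike.ofReal ∘ hH.eigenvalues) * (v₁ * U) := by
          noncomm_ring
      _ = Matrix.diagonal (fun i => ((hH.eigenvalues i : ℝ) : ℂ)) := by
          rw [hU2]; simp
  -- matrix relations
  set dvec : Fin 2 → ℂ := fun i => ((hH.eigenvalues i : ℝ) : ℂ) with hdvec
  set D : Matrix (Fin 2) (Fin 2) ℂ := Matrix.diagonal dvec with hDdef
  have hGD' : G * G.conjTranspose = D := hGD
  obtain ⟨hDGD, hGD2⟩ :=
    diag_rel G D (c:ℂ) (Matrix.diagonal_transpose dvec) hGD' hGc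
  -- entry notations
  set a := G 0 0 with ha
  set bb := G 0 1 with hbb
  set dd := G 1 0 with hdd
  set ee := G 1 1 with hee
  set ev0 := hH.eigenvalues 0 with hev0
  set ev1 := hH.eigenvalues 1 with hev1
  have e00 : a * (starRingEnd ℂ) a + bb * (starRingEnd ℂ) dd = (c:ℂ) := by
    have h := Matrix.ext_iff.2 hGc 0 0
    simpa [Matrix.mul_apply, Fin.sum_univ_two, Matrix.one_apply, Matrix.map_apply] using h
  have e01 : a * (starRingEnd ℂ) bb + bb * (starRingEnd ℂ) ee = 0 := by
    have h := Matrix.ext_iff.2 hGc 0 1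
    simpa [Matrix.mul_apply, Fin.sum_univ_two, Matrix.one_apply, Matrix.map_apply] using h
  have e10 : dd * (starRingEnd ℂ) a + ee * (starRingEnd ℂ) dd = 0 := by
    have h := Matrix.ext_iff.2 hGc 1 0
    simpa [Matrix.mul_apply, Fin.sum_univ_two, Matrix.one_apply, Matrix.map_apply] using h
  have e11 : dd * (starRingEnd ℂ) bb + ee * (starRingEnd ℂ) ee = (c:ℂ) := by
    have h := Matrix.ext_iff.2 hGc 1 1
    simpa [Matrix.mul_apply, Fin.sum_univ_two, Matrix.one_apply, Matrix.map_apply] using h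
  have f00 : a * (starRingEnd ℂ) a + bb * (starRingEnd ℂ) bb = ((ev0:ℝ):ℂ) := by
    have h := Matrix.ext_iff.2 hGD' 0 0
    simpa [Matrix.mul_apply, Fin.sum_univ_two, Matrix.conjTranspose_apply,
      Matrix.diagonal_apply, hDdef, hdvec] using h
  have f11 : dd * (starRingEnd ℂ) dd + ee * (starRingEnd ℂ) ee = ((ev1:ℝ):ℂ) := by
    have h := Matrix.ext_iff.2 hGD' 1 1
    simpa [Matrix.mul_apply, Fin.sum_univ_two, Matrix.conjTranspose_apply,
      Matrix.diagonal_apply, hDdef, hdvec] using h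
  -- DGD entries
  have g00 : ((ev0:ℝ):ℂ) * a * ((ev0:ℝ):ℂ) = (c:ℂ)^2 * a := by
    have h := Matrix.ext_iff.2 hDGD 0 0
    simpa [Matrix.diagonal_mul, Matrix.mul_diagonal, hDdef, hdvec] using h
  have g11 : ((ev1:ℝ):ℂ) * ee * ((ev1:ℝ):ℂ) = (c:ℂ)^2 * ee := by
    have h := Matrix.ext_iff.2 hDGD 1 1
    simpa [Matrix.diagonal_mul, Matrix.mul_diagonal, hDdef, hdvec] using h
  -- determinant relation
  have hev01 : ev0 * ev1 = c^2 := by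
    have h1 := congrArg Matrix.det hGD'
    rw [Matrix.det_mul, Matrix.det_conjTranspose] at h1
    have h2 := congrArg Matrix.det hGc
    have h3 : (G.map (starRingEnd ℂ)).det = (starRingEnd ℂ) G.det := by
      rw [show G.map (starRingEnd ℂ) = (starRingEnd ℂ).mapMatrix G from rfl]
      exact ((starRingEnd ℂ).map_det G).symm
    rw [Matrix.det_mul, h3] at h2
    have h4 : ((c:ℂ) • (1 : Matrix (Fin 2) (Fin 2) ℂ)).det = (c:ℂ)^2 := by
      simp [Matrix.det_smul]
    rw [h4] at h2
    have h5 : D.det = ((ev0 * ev1 : ℝ):ℂ) := by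
      simp [hDdef, Matrix.det_diagonal, hdvec, Fin.prod_univ_two]
      rfl
    rw [show star G.det = (starRingEnd ℂ) G.det from rfl, h2, h5] at h1
    exact_mod_cast h1.symm
  -- positivity of ev0
  have hev0_eq : ev0 = Complex.normSq a + Complex.normSq bb := by
    have : ((ev0:ℝ):ℂ) = ((Complex.normSq a + Complex.normSq bb : ℝ):ℂ) := by
      rw [← f00, Complex.mul_conj, Complex.mul_conj]; norm_cast
    exact_mod_cast this
  have hev1_eq : ev1 = Complex.normSq dd + Complex.normSq ee := by
    have : ((ev1:ℝ):ℂ) = ((Complex.normSq dd + Complex.normSq ee : ℝ):ℂ) := by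
      rw [← f11, Complex.mul_conj, Complex.mul_conj]; norm_cast
    exact_mod_cast this
  have k00 : a * ((ev0:ℝ):ℂ) = (c:ℂ) * a := by
    have h := Matrix.ext_iff.2 hGD2 0 0
    simpa [Matrix.mul_diagonal, hDdef, hdvec, Matrix.smul_apply, Matrix.transpose_apply,
      smul_eq_mul] using h
  have k10 : dd * ((ev0:ℝ):ℂ) = (c:ℂ) * bb := by
    have h := Matrix.ext_iff.2 hGD2 1 0
    simpa [Matrix.mul_diagonal, hDdef, hdvec, Matrix.smul_apply, Matrix.transpose_apply,
      smul_eq_mul] using h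
  have k11 : ee * ((ev1:ℝ):ℂ) = (c:ℂ) * ee := by
    have h := Matrix.ext_iff.2 hGD2 1 1
    simpa [Matrix.mul_diagonal, hDdef, hdvec, Matrix.smul_apply, Matrix.transpose_apply,
      smul_eq_mul] using h
  have hcC : (c:ℂ) ≠ 0 := Complex.ofReal_ne_zero.2 hc0
  have hGgood : goodForm G := by
    rcases eq_or_ne ev0 ev1 with hev | hev
    · -- equal eigenvalues
      have hsq : ev0 * ev0 = c^2 := by rw [← hev] at hev01; exact hev01
      have hnn : 0 ≤ ev0 := by
        rw [hev0_eq]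
        have h1 := Complex.normSq_nonneg a
        have h2 := Complex.normSq_nonneg bb
        linarith
      rcases hc0.lt_or_gt with hneg | hpos
      · -- c < 0
        have heqc : ev0 = -c := by nlinarith
        have hev0C : ((ev0:ℝ):ℂ) = -(c:ℂ) := by rw [heqc]; push_cast; ring
        have hev1C : ((ev1:ℝ):ℂ) = -(c:ℂ) := by rw [← hev]; exact hev0C
        have ha0 : a = 0 := by
          have h2 : (2*(c:ℂ))*a = 0 := by
            rw [hev0C] at k00; linear_combination -k00
          rcases mul_eq_zero.1 h2 with h | h
          · exact absurd h (by simpa using hcC)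
          · exact h
        have he0 : ee = 0 := by
          have h2 : (2*(c:ℂ))*ee = 0 := by
            rw [hev1C] at k11; linear_combination -k11
          rcases mul_eq_zero.1 h2 with h | h
          · exact absurd h (by simpa using hcC)
          · exact h
        have hd0 : dd = -bb := by
          have h2 : (c:ℂ) * (dd + bb) = 0 := by
            rw [hev0C] at k10; linear_combination -k10
          rcases mul_eq_zero.1 h2 with h | h
          · exact absurd h hcC
          · linear_combination h
        have hbne : bb ≠ 0 := by
          intro h
          rw [ha0, h] at e00
          simp at e00
          exact hc0 (by exact_mod_cast e00.symm)
        have hGmat : G = !![0, bb; -bb, 0] := by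
          rw [Matrix.eta_fin_two G, ← ha, ← hbb, ← hdd, ← hee, ha0, he0, hd0]
        rw [hGmat]
        exact case_B1 c hc0 bb hbne
      · -- c > 0
        have heqc : ev0 = c := by nlinarith
        have hev0C : ((ev0:ℝ):ℂ) = (c:ℂ) := by rw [heqc]
        have hd0 : dd = bb := by
          have h2 : (c:ℂ) * (dd - bb) = 0 := by
            rw [hev0C] at k10; linear_combination k10
          rcases mul_eq_zero.1 h2 with h | h
          · exact absurd h hcC
          · linear_combination h
        have hGmat : G = !![a, bb; bb, ee] := by
          rw [Matrix.eta_fin_two G, ← ha, ← hbb, ← hdd, ← hee, hd0]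
        rw [hGmat]
        refine case_B2 c hpos a bb ee ?_ e01 ?_
        · rw [← e00, hd0]
        · rw [← e11, hd0]
    · -- distinct eigenvalues
      have hev0ne : ev0 ≠ 0 := by
        intro h; rw [h, zero_mul] at hev01
        exact hc0 (by nlinarith)
      have hev1ne : ev1 ≠ 0 := by
        intro h; rw [h, mul_zero] at hev01
        exact hc0 (by nlinarith)
      have hsq0 : ev0^2 ≠ c^2 := by
        intro h
        rw [← hev01] at h
        have : ev0 * (ev0 - ev1) = 0 := by nlinarith
        rcases mul_eq_zero.1 this with h' | h'
        · exact hev0ne h'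
        · exact hev (by linarith)
      have hsq1 : ev1^2 ≠ c^2 := by
        intro h
        rw [← hev01] at h
        have : ev1 * (ev0 - ev1) = 0 := by nlinarith
        rcases mul_eq_zero.1 this with h' | h'
        · exact hev1ne h'
        · exact hev (by linarith)
      have ha0 : a = 0 := by
        have h2 : (((ev0^2 - c^2 : ℝ)):ℂ) * a = 0 := by
          push_cast
          linear_combination g00
        rcases mul_eq_zero.1 h2 with h | h
        · exact absurd h (Complex.ofReal_ne_zero.2 (sub_ne_zero.2 hsq0))
        · exact h
      have he0 : ee = 0 := by
        have h2 : (((ev1^2 - c^2 : ℝ)):ℂ) * ee = 0 := by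
          push_cast
          linear_combination g11
        rcases mul_eq_zero.1 h2 with h | h
        · exact absurd h (Complex.ofReal_ne_zero.2 (sub_ne_zero.2 hsq1))
        · exact h
      have hbd : bb * (starRingEnd ℂ) dd = (c:ℂ) := by
        rw [ha0] at e00; simpa using e00
      have hGmat : G = !![0, bb; dd, 0] := by
        rw [Matrix.eta_fin_two G, ← ha, ← hbb, ← hdd, ← hee, ha0, he0]
      rw [hGmat]
      exact case_A c hc0 bb dd hbd
  have hfinal : goodForm F := goodForm_conj F v₁ hv₁mem (by rw [← hGdef]; exact hGgood)
  obtain ⟨v, hv, q, hq1, hq2, s, hs, heq⟩ := hfinal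
  exact ⟨v, hv, q, hq1, hq2, s, hs, heq⟩
end

section
/- Let (A, Δ) be a compact quantum group with Haar state h, and let β : B → A ⊗ B be an ergodic left action on a unital C*-algebra B with unique invariant state ω (satisfying (h ⊗ id)β(b) = ω(b)·1 for all b ∈ B, where the expression means applying h to the first leg). Let (L²(B), Λ) be the GNS construction for ω, and let β′ be the induced isometry on L²(B) with β′(Λ(b)) = (id ⊗ Λ)(β(b)). If ξ ∈ L²(B) satisfies β′(ξ) = 1_A ⊗ ξ, then ξ ∈ ℂ·Λ(1_B). -/
/-- for an ergodic action `β` of a compact quantum group `(A,Δ)` with Haar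
state `h` on a unital C*-algebra `B`, with invariant state `ω` (so `(h⊗id)β(b) = ω(b)1`),
any vector `ξ` of the GNS space `L²(B)` fixed by the induced representation
(`β′(ξ) = 1 ⊗ ξ`) lies in `ℂ·Λ(1)`.  Here the Hilbert space `W` plays the role of
`A ⊗ L²(B)`, `e : ξ ↦ 1_A ⊗ ξ`, and `hmap` the slice map `h ⊗ id : A ⊗ L²(B) → L²(B)`,
so that the invariance of `ω` reads `hmap (β′(Λ b)) = ω(b)·Λ(1)`. -/
theorem ergodic_fixed_vector
    {B L W : Type*} [Ring B] [Algebra ℂ B]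
    [NormedAddCommGroup L] [InnerProductSpace ℂ L] [CompleteSpace L]
    [NormedAddCommGroup W] [InnerProductSpace ℂ W] [CompleteSpace W]
    (Λ : B →ₗ[ℂ] L) (hΛdense : DenseRange ⇑Λ)
    (ω : B →ₗ[ℂ] ℂ)
    (β' : L →L[ℂ] W)        -- the unitary representation `β′ : L²(B) → A ⊗ L²(B)`
    (hmap : W →L[ℂ] L)      -- the slice map `h ⊗ id`
    (e : L →L[ℂ] W)         -- `ξ ↦ 1_A ⊗ ξ`
    (he : ∀ ξ : L, hmap (e ξ) = ξ)
    (hinvariance : ∀ b : B, hmap (β' (Λ b)) = ω b • Λ 1)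
    (ξ : L) (hfix : β' ξ = e ξ) :
    ∃ cst : ℂ, ξ = cst • Λ 1 := by
  set P : L →L[ℂ] L := hmap.comp β' with hP
  have hPΛ : ∀ b : B, P (Λ b) ∈ Submodule.span ℂ ({Λ 1} : Set L) := by
    intro b
    simp only [hP, ContinuousLinearMap.comp_apply, hinvariance]
    exact Submodule.smul_mem _ _ (Submodule.mem_span_singleton_self _)
  have hξ : P ξ = ξ := by
    simp [hP, hfix, he]
  have hclosed : IsClosed ((Submodule.span ℂ ({Λ 1} : Set L)) : Set L) :=
    (Submodule.span ℂ ({Λ 1} : Set L)).closed_of_finiteDimensional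
  have hmem : ξ ∈ (Submodule.span ℂ ({Λ 1} : Set L) : Set L) := by
    have hξcl : ξ ∈ closure (Set.range ⇑Λ) := hΛdense ξ
    have : P ξ ∈ closure (⇑P '' Set.range ⇑Λ) :=
      (P.continuous.continuousWithinAt).mem_closure_image hξcl
    rw [hξ] at this
    refine closure_minimal ?_ hclosed this
    rintro _ ⟨_, ⟨b, rfl⟩, rfl⟩
    exact hPΛ b
  obtain ⟨c, hc⟩ := Submodule.mem_span_singleton.mp hmem
  exact ⟨c, hc.symm⟩
end
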